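/- arXiv:1609.02716 — 4 statements merged into one kernel-verified Lean document; each statement's English description precedes it below -/
import Mathlib

section
/- Let K be a finite extension of Q_p with ring of integers O, maximal ideal p, and ramification index e. For f ∈ O^× let o(f,l) denote the order of the image of f in (O/p^l)^×. Suppose f^{o(f,1)} ∈ U^(n) \ U^(n+1) where n > e/(p-1). Then for all l ≥ n, o(f,l) = o(f,1) · p^⌈(l-n)/e⌉. -/
set_option synthInstance.maxHeartbeats 1000000
set_option linter.unusedSectionVars false
set_option maxHeartbeats 1000000

/-- `o(f,l)`: the order of the image of the unit `f` in `(O/𝔭^l)ˣ`. -/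
noncomputable def unitOrderMod {O : Type*} [CommRing O] (P : Ideal O) (f : Oˣ) (l : ℕ) : ℕ :=
  orderOf (Units.map (Ideal.Quotient.mk (P ^ l)).toMonoidHom f)

section Aux

open IsDedekindDomain HeightOneSpectrum

variable {R : Type*} [CommRing R] [IsDomain R] [IsDedekindDomain R] (v : HeightOneSpectrum R)

lemma aux_mem_pow_iff_val (x : R) (m : ℕ) :
    x ∈ v.asIdeal ^ m ↔ v.intValuation x ≤ Multiplicative.ofAdd (-(m:ℤ)) := by
  exact Ideal.dvd_span_singleton.symm.trans (v.intValuation_le_pow_iff_dvd x m).symm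

lemma aux_val_eq {x : R} {s : ℕ} (h1 : x ∈ v.asIdeal ^ s) (h2 : x ∉ v.asIdeal ^ (s+1)) :
    v.intValuation x = Multiplicative.ofAdd (-(s:ℤ)) := by
  rw [aux_mem_pow_iff_val] at h1 h2
  have hx0 : v.intValuation x ≠ 0 := by
    intro h
    exact h2 (by simp [h])
  obtain ⟨y, hy⟩ := Option.ne_none_iff_exists.mp hx0
  have hy' : (y : WithZero (Multiplicative ℤ)) = v.intValuation x := hy
  rw [← hy'] at h1 h2 ⊢
  rw [WithZero.coe_le_coe] at h1 h2
  rw [WithZero.coe_inj]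
  have h1' : Multiplicative.toAdd y ≤ -(s:ℤ) := h1
  have h2' : ¬ (Multiplicative.toAdd y ≤ -((s:ℤ)+1)) := by
    intro h
    exact h2 (by exact_mod_cast h)
  have h3 : Multiplicative.toAdd y = -(s:ℤ) := by omega
  rw [← h3]
  rfl

lemma aux_mul_notmem {a b : R} {s t : ℕ} (ha : a ∈ v.asIdeal ^ s) (ha' : a ∉ v.asIdeal ^ (s+1))
    (hb : b ∈ v.asIdeal ^ t) (hb' : b ∉ v.asIdeal ^ (t+1)) :
    a * b ∈ v.asIdeal ^ (s+t) ∧ a * b ∉ v.asIdeal ^ (s+t+1) := by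
  constructor
  · rw [pow_add]; exact Ideal.mul_mem_mul ha hb
  · rw [aux_mem_pow_iff_val, map_mul, aux_val_eq v ha ha', aux_val_eq v hb hb']
    rw [← WithZero.coe_mul, WithZero.coe_le_coe, ← ofAdd_add]
    intro h
    have := Multiplicative.ofAdd_le.mp h
    omega

lemma aux_p_mem {π : R} {e : ℕ} (hpe : Ideal.span {π} = v.asIdeal ^ e) :
    π ∈ v.asIdeal ^ e ∧ π ∉ v.asIdeal ^ (e+1) := by
  constructor
  · rw [← hpe]; exact Ideal.mem_span_singleton_self π
  · intro h
    have hle : v.asIdeal ^ e ≤ v.asIdeal ^ (e+1) := by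
      rw [← hpe]
      rwa [Ideal.span_le, Set.singleton_subset_iff]
    have heq : v.asIdeal ^ e = v.asIdeal ^ (e+1) :=
      le_antisymm hle (Ideal.pow_le_pow_right (Nat.le_succ e))
    rw [pow_succ] at heq
    have hne : v.asIdeal ^ e ≠ 0 := pow_ne_zero e (by
      rw [Ideal.zero_eq_bot]; exact v.ne_bot)
    have h1 : (1 : Ideal R) = v.asIdeal := by
      apply mul_left_cancel₀ hne
      rw [mul_one, ← heq]
    exact v.isPrime.ne_top (by rw [← Ideal.one_eq_top, h1])

lemma aux_step {p e : ℕ} (hp : p.Prime) (hpe : Ideal.span {((p : ℕ) : R)} = v.asIdeal ^ e)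
    {x : R} {s : ℕ} (hs : 1 ≤ s) (hse : e + 1 ≤ (p - 1) * s)
    (h1 : x - 1 ∈ v.asIdeal ^ s) (h2 : x - 1 ∉ v.asIdeal ^ (s+1)) :
    x ^ p - 1 ∈ v.asIdeal ^ (s+e) ∧ x ^ p - 1 ∉ v.asIdeal ^ (s+e+1) := by
  set u := x - 1 with hu
  have hx : x = u + 1 := by rw [hu]; ring
  have expand : x ^ p = ∑ i ∈ Finset.range (p+1), u ^ i * (p.choose i : R) := by
    rw [hx, add_pow]
    simp
  have hp1 : 1 < p := hp.one_lt
  -- p * s ≥ s + e + 1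
  have hq : p - 1 + 1 = p := Nat.succ_pred_eq_of_pos hp.pos
  have hps' : p * s = (p - 1) * s + s := by
    conv_lhs => rw [← hq]
    rw [Nat.succ_mul]
  have hps : s + e + 1 ≤ s * p := by
    rw [Nat.mul_comm s p, hps']
    omega
  have key : x ^ p - 1 - (p : R) * u = ∑ i ∈ Finset.Ico 2 (p+1), u ^ i * (p.choose i : R) := by
    rw [expand, Finset.range_eq_Ico,
      Finset.sum_eq_sum_Ico_succ_bot (by omega : 0 < p + 1),
      Finset.sum_eq_sum_Ico_succ_bot (by omega : 1 < p + 1)]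
    simp only [pow_zero, Nat.choose_zero_right, Nat.choose_one_right, pow_one, Nat.cast_one]
    ring
  have hsum : ∑ i ∈ Finset.Ico 2 (p+1), u ^ i * (p.choose i : R) ∈ v.asIdeal ^ (s+e+1) := by
    apply Ideal.sum_mem
    intro i hi
    rcases Finset.mem_Ico.mp hi with ⟨h2i, hip⟩
    have hui : u ^ i ∈ (v.asIdeal ^ s) ^ i := Ideal.pow_mem_pow h1 i
    rw [← pow_mul] at hui
    by_cases hip' : i = p
    · rw [hip']
      have hmem : u ^ p ∈ v.asIdeal ^ (s+e+1) := by
        apply Ideal.pow_le_pow_right hps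
        rw [hip'] at hui
        exact hui
      simpa using hmem
    · obtain ⟨c, hc⟩ := hp.dvd_choose_self (by omega : i ≠ 0) (by omega : i < p)
      have hterm : u ^ i * (p.choose i : R) = ((p:ℕ):R) * u ^ i * (c : R) := by
        rw [hc]; push_cast; ring
      rw [hterm]
      apply Ideal.mul_mem_right
      have hmem2 : u ^ i ∈ v.asIdeal ^ (2*s) := by
        apply Ideal.pow_le_pow_right _ hui
        calc 2 * s ≤ i * s := Nat.mul_le_mul_right s h2i
        _ = s * i := Nat.mul_comm i s
      have hpm : ((p:ℕ):R) ∈ v.asIdeal ^ e := (aux_p_mem v hpe).1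
      have hmul : ((p:ℕ):R) * u ^ i ∈ v.asIdeal ^ (e + 2*s) := by
        rw [pow_add]; exact Ideal.mul_mem_mul hpm hmem2
      exact Ideal.pow_le_pow_right (by omega) hmul
  obtain ⟨hpu0, hpu0'⟩ := aux_mul_notmem v (aux_p_mem v hpe).1 (aux_p_mem v hpe).2 h1 h2
  have hpu : ((p:ℕ):R) * u ∈ v.asIdeal ^ (s+e) := by
    rw [Nat.add_comm s e]; exact hpu0
  have hpu' : ((p:ℕ):R) * u ∉ v.asIdeal ^ (s+e+1) := by
    rw [show s + e + 1 = e + s + 1 by omega]; exact hpu0'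
  have hdecomp : x ^ p - 1 = (p:R) * u + (x ^ p - 1 - (p : R) * u) := by ring
  constructor
  · rw [hdecomp]
    refine Ideal.add_mem _ hpu ?_
    rw [key]
    exact Ideal.pow_le_pow_right (Nat.le_succ _) hsum
  · intro h
    apply hpu'
    have hrw : (p:R) * u = (x ^ p - 1) - (x ^ p - 1 - (p : R) * u) := by ring
    rw [hrw]
    exact Ideal.sub_mem _ h (key ▸ hsum)

lemma aux_iter {p e n : ℕ} (hp : p.Prime) (hpe : Ideal.span {((p : ℕ) : R)} = v.asIdeal ^ e)
    (hn : 1 ≤ n) (hne : e + 1 ≤ (p - 1) * n)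
    {x : R} (h1 : x - 1 ∈ v.asIdeal ^ n) (h2 : x - 1 ∉ v.asIdeal ^ (n+1)) :
    ∀ j : ℕ, x ^ (p ^ j) - 1 ∈ v.asIdeal ^ (n + j*e) ∧
      x ^ (p ^ j) - 1 ∉ v.asIdeal ^ (n + j*e + 1) := by
  intro j
  induction j with
  | zero => simpa using ⟨h1, h2⟩
  | succ j ih =>
    have hs : 1 ≤ n + j*e := by omega
    have hse : e + 1 ≤ (p - 1) * (n + j*e) := le_trans hne (Nat.mul_le_mul_left _ (by omega))
    have hstep := aux_step v hp hpe hs hse ih.1 ih.2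
    rw [← pow_mul, ← pow_succ] at hstep
    have harith : n + j*e + e = n + (j+1)*e := by ring
    rw [harith] at hstep
    exact hstep

end Aux

/-- Let `K` be a finite extension of `ℚ_p` with ring of integers `O`,
maximal ideal `𝔭` and ramification index `e`.  For `f ∈ Oˣ` let `o(f,l)` be the order
of `f` in `(O/𝔭^l)ˣ`.  If `f^(o(f,1)) ∈ U^(n) \ U^(n+1)` with `n > e/(p-1)`, then for
all `l ≥ n` one has `o(f,l) = o(f,1) · p^⌈(l-n)/e⌉`. -/
theorem unit_order_growth
    (p : ℕ) [Fact p.Prime] (K : Type*) [Field K] [Algebra ℚ_[p] K]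
    [FiniteDimensional ℚ_[p] K] [Algebra ℤ_[p] K] [IsScalarTower ℤ_[p] ℚ_[p] K]
    (O : Subalgebra ℤ_[p] K) (hO : O = integralClosure ℤ_[p] K)
    (P : Ideal O) (hP : P.IsMaximal)
    (e : ℕ) (he : Ideal.span {(p : O)} = P ^ e) (he0 : 0 < e)
    (n : ℕ) (hn : (e : ℚ) / (p - 1) < n)
    (f : Oˣ)
    (hfn : ((f ^ unitOrderMod P f 1 : Oˣ) : O) - 1 ∈ P ^ n)
    (hfn' : ((f ^ unitOrderMod P f 1 : Oˣ) : O) - 1 ∉ P ^ (n + 1)) :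
    ∀ l : ℕ, n ≤ l →
      unitOrderMod P f l = unitOrderMod P f 1 * p ^ ((l - n + e - 1) / e) := by
  subst hO
  have hp : p.Prime := Fact.out
  have hCh : CharZero K := charZero_of_injective_algebraMap (algebraMap ℚ_[p] K).injective
  haveI : IsDedekindDomain (integralClosure ℤ_[p] K) :=
    integralClosure.isDedekindDomain ℤ_[p] ℚ_[p] K
  -- (p : O) ≠ 0
  have hpne : ((p:ℕ) : ↥(integralClosure ℤ_[p] K)) ≠ 0 := by
    intro h
    have h2 : ((((p:ℕ) : ↥(integralClosure ℤ_[p] K))) : K) = ((0 : ↥(integralClosure ℤ_[p] K)) : K) := by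
      rw [h]
    rw [ZeroMemClass.coe_zero] at h2
    have h3 : (((p:ℕ) : ↥(integralClosure ℤ_[p] K)) : K) = ((p:ℕ) : K) := by push_cast; ring
    rw [h3] at h2
    exact Nat.cast_ne_zero.mpr hp.pos.ne' h2
  have hPbot : P ≠ ⊥ := by
    intro h
    rw [h] at he
    rw [show (⊥ : Ideal ↥(integralClosure ℤ_[p] K)) ^ e = ⊥ by
      rw [← Ideal.zero_eq_bot]; exact zero_pow he0.ne'] at he
    exact hpne (Ideal.span_singleton_eq_bot.mp he)
  set v : IsDedekindDomain.HeightOneSpectrum ↥(integralClosure ℤ_[p] K) :=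
    ⟨P, hP.isPrime, hPbot⟩ with hv
  have hvP : v.asIdeal = P := rfl
  -- numeric consequences of hn
  have hp1 : 1 < p := hp.one_lt
  have hne : e + 1 ≤ (p - 1) * n := by
    have hq : (0:ℚ) < (p:ℚ) - 1 := by
      have h1 : (1:ℚ) < (p:ℚ) := by exact_mod_cast hp1
      linarith
    have hlt : (e:ℚ) < (n:ℚ) * ((p:ℚ) - 1) := by
      rw [div_lt_iff₀ hq] at hn
      linarith
    have hcast : ((p:ℚ) - 1) = ((p - 1 : ℕ) : ℚ) := by
      have h1 : 1 ≤ p := hp.one_le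
      push_cast [Nat.cast_sub h1]
      ring
    rw [hcast, ← Nat.cast_mul] at hlt
    have h4 := Nat.cast_lt (α := ℚ) |>.mp hlt
    have h5 : n * (p - 1) = (p - 1) * n := Nat.mul_comm _ _
    omega
  have hn1 : 1 ≤ n := by
    by_contra h
    have h0 : n = 0 := by omega
    rw [h0] at hne
    simp at hne
  set m := unitOrderMod P f 1 with hm
  have hm0 : 0 < m := by
    rcases Nat.eq_zero_or_pos m with h | h
    · exfalso
      rw [h] at hfn'
      simp only [pow_zero, Units.val_one, sub_self] at hfn'
      exact hfn' (Submodule.zero_mem _)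
    · exact h
  -- the iteration
  have hfn2 : ((f ^ m : (↥(integralClosure ℤ_[p] K))ˣ) : ↥(integralClosure ℤ_[p] K)) - 1 ∈ v.asIdeal ^ n := hfn
  have hfn2' : ((f ^ m : (↥(integralClosure ℤ_[p] K))ˣ) : ↥(integralClosure ℤ_[p] K)) - 1 ∉ v.asIdeal ^ (n+1) := hfn'
  have iter := aux_iter v hp he hn1 hne hfn2 hfn2'
  intro l hl
  set k := (l - n + e - 1) / e with hk
  -- arithmetic facts about k
  have f0 : e * ((l-n+e-1)/e) + (l-n+e-1) % e = (l-n+e-1) := Nat.div_add_mod _ _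
  have f1 : (l-n+e-1) % e < e := Nat.mod_lt _ he0
  have f2 : (l-n+e-1)/e * e = e * ((l-n+e-1)/e) := Nat.mul_comm _ _
  have hk1 : l ≤ n + k * e := by rw [hk]; omega
  have hk2 : 1 ≤ k → n + (k-1) * e + 1 ≤ l := by
    intro hkpos
    have f3 : (k-1) * e + 1 * e = k * e := by
      rw [← Nat.add_mul]
      congr 1
      omega
    have f4 : e * 1 ≤ e * ((l-n+e-1)/e) := Nat.mul_le_mul_left e (hk ▸ hkpos)
    rw [hk] at f3 ⊢
    omega
  -- notation
  set φ := (Ideal.Quotient.mk (P ^ l)).toMonoidHom with hφ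
  set F := Units.map φ f with hF
  have hval : ∀ N : ℕ, (F ^ N = 1) ↔ ((f ^ N : (↥(integralClosure ℤ_[p] K))ˣ) : ↥(integralClosure ℤ_[p] K)) - 1 ∈ P ^ l := by
    intro N
    rw [hF, hφ, ← map_pow, Units.ext_iff, Units.coe_map, Units.val_one]
    simp only [RingHom.toMonoidHom_eq_coe, MonoidHom.coe_coe]
    rw [show (1 : ↥(integralClosure ℤ_[p] K) ⧸ P ^ l) = Ideal.Quotient.mk (P ^ l) 1 from
      (map_one _).symm, Ideal.Quotient.eq]
  have hpow_val : ∀ j : ℕ, ((f ^ (m * p ^ j) : (↥(integralClosure ℤ_[p] K))ˣ) : ↥(integralClosure ℤ_[p] K)) =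
      ((f ^ m : (↥(integralClosure ℤ_[p] K))ˣ) : ↥(integralClosure ℤ_[p] K)) ^ (p ^ j) := by
    intro j
    rw [pow_mul, Units.val_pow_eq_pow_val]
  -- F ^ (m * p ^ k) = 1
  have hFone : F ^ (m * p ^ k) = 1 := by
    rw [hval, hpow_val]
    exact Ideal.pow_le_pow_right hk1 (iter k).1
  have htfin : orderOf F ∣ m * p ^ k := orderOf_dvd_of_pow_eq_one hFone
  -- m divides orderOf F
  have hl1 : (1:ℕ) ≤ l := le_trans hn1 hl
  have hle1 : P ^ l ≤ P ^ 1 := Ideal.pow_le_pow_right hl1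
  have hmdvd : m ∣ orderOf F := by
    have hcomp : Units.map (Ideal.Quotient.factor hle1).toMonoidHom F =
        Units.map (Ideal.Quotient.mk (P ^ 1)).toMonoidHom f := by
      apply Units.ext
      rw [Units.coe_map, Units.coe_map, Units.coe_map, hφ]
      simp only [RingHom.toMonoidHom_eq_coe, MonoidHom.coe_coe]
      exact Ideal.Quotient.factor_mk hle1 _
    have hm_eq : m = orderOf (Units.map (Ideal.Quotient.mk (P ^ 1)).toMonoidHom f) := hm
    rw [hm_eq, ← hcomp]
    exact orderOf_map_dvd _ _
  -- order of G := F ^ m is p ^ k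
  set G := F ^ m with hG
  have hGone : G ^ (p ^ k) = 1 := by rw [hG, ← pow_mul]; exact hFone
  have hGdvd : orderOf G ∣ p ^ k := orderOf_dvd_of_pow_eq_one hGone
  have hGorder : orderOf G = p ^ k := by
    rcases Nat.eq_zero_or_pos k with hk0 | hkpos
    · rw [hk0] at hGdvd ⊢
      simpa using hGdvd
    · obtain ⟨j, hj, hjeq⟩ := (Nat.dvd_prime_pow hp).mp hGdvd
      rcases Nat.lt_or_ge j k with hjk | hjk
      · exfalso
        have hsmall : G ^ (p ^ (k-1)) = 1 := by
          apply orderOf_dvd_iff_pow_eq_one.mp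
          rw [hjeq]
          exact pow_dvd_pow p (by omega)
        rw [hG, ← pow_mul, hval, hpow_val] at hsmall
        exact (iter (k-1)).2 (Ideal.pow_le_pow_right (hk2 hkpos) hsmall)
      · rw [hjeq]
        congr 1
        omega
  -- conclude
  obtain ⟨t', ht'⟩ := hmdvd
  have hGt' : G ^ t' = 1 := by
    rw [hG, ← pow_mul, ← ht']
    exact pow_orderOf_eq_one F
  have hpk_dvd : p ^ k ∣ t' := hGorder ▸ orderOf_dvd_of_pow_eq_one hGt'
  have hdvd2 : m * p ^ k ∣ orderOf F := ht' ▸ Nat.mul_dvd_mul_left m hpk_dvd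
  have hfinal : orderOf F = m * p ^ k := Nat.dvd_antisymm htfin hdvd2
  rw [show unitOrderMod P f l = orderOf F from rfl, hfinal]
end

section
/- Let L be a q-elementary nondegenerate integral lattice (q prime) and f ∈ O(L) an isometry. Then the characteristic polynomial of the induced map f̄ on the discriminant group A_L = L^∨/L (an F_q-vector space) divides the reduction modulo q of the characteristic polynomial of f on L. -/
variable {V : Type*} [AddCommGroup V] [Module ℚ V]

/-- The dual lattice of a `ℤ`-lattice `L` in a rational quadratic space `(V, B)`:
all vectors pairing integrally with every element of `L`. -/
def dualLattice (B : V →ₗ[ℚ] V →ₗ[ℚ] ℚ) (L : Submodule ℤ V) : Submodule ℤ V where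
  carrier := {v | ∀ x ∈ L, ∃ m : ℤ, B v x = m}
  zero_mem' := fun x _ => ⟨0, by simp⟩
  add_mem' := by
    intro a b ha hb x hx
    obtain ⟨m, hm⟩ := ha x hx
    obtain ⟨k, hk⟩ := hb x hx
    exact ⟨m + k, by simp [hm, hk]⟩
  smul_mem' := by
    intro c v hv x hx
    obtain ⟨m, hm⟩ := hv x hx
    refine ⟨c * m, ?_⟩
    have : B (c • v) = c • B v := map_zsmul B c v
    rw [this]
    simp [hm]


open LinearMap Matrix

lemma charpoly_snd_dvd {R M N ι κ : Type*} [CommRing R] [Nontrivial R]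
    [AddCommGroup M] [Module R M] [AddCommGroup N] [Module R N]
    [Fintype ι] [Fintype κ] [DecidableEq ι] [DecidableEq κ]
    [Module.Free R N] [Module.Finite R N] [Module.Free R (M × N)] [Module.Finite R (M × N)]
    (bM : Module.Basis ι R M) (bN : Module.Basis κ R N)
    (φ : M × N →ₗ[R] M × N) (ψ : N →ₗ[R] N)
    (h : ∀ x : M × N, (φ x).2 = ψ x.2) :
    ψ.charpoly ∣ φ.charpoly := by
  haveI := Module.Free.of_basis bM
  haveI := Module.Free.of_basis bN
  haveI := Module.Finite.of_basis bM
  haveI := Module.Finite.of_basis bN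
  haveI := Module.Free.of_basis (bM.prod bN)
  haveI := Module.Finite.of_basis (bM.prod bN)
  set b := bM.prod bN with hb
  rw [← LinearMap.charpoly_toMatrix φ b, ← LinearMap.charpoly_toMatrix ψ bN]
  set T := LinearMap.toMatrix b b φ with hT
  have h21 : T.toBlocks₂₁ = 0 := by
    ext i j
    simp only [Matrix.toBlocks₂₁, Matrix.of_apply, hT, LinearMap.toMatrix_apply,
      Matrix.zero_apply, hb]
    rw [Module.Basis.prod_repr_inr, h]
    have h0 : ((bM.prod bN) (Sum.inl j)).2 = 0 := by simp [Module.Basis.prod_apply]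
    rw [h0, map_zero, map_zero, Finsupp.zero_apply]
  have h22 : T.toBlocks₂₂ = LinearMap.toMatrix bN bN ψ := by
    ext i j
    simp only [Matrix.toBlocks₂₂, Matrix.of_apply, hT, LinearMap.toMatrix_apply, hb]
    rw [Module.Basis.prod_repr_inr, h]
    have h0 : ((bM.prod bN) (Sum.inr j)).2 = bN j := by simp [Module.Basis.prod_apply]
    rw [h0]
  have hblock : T = Matrix.fromBlocks T.toBlocks₁₁ T.toBlocks₁₂ 0 (LinearMap.toMatrix bN bN ψ) := by
    conv_lhs => rw [← Matrix.fromBlocks_toBlocks T]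
    rw [h21, h22]
  rw [hblock, Matrix.charpoly_fromBlocks_zero₂₁]
  exact Dvd.intro_left _ rfl

lemma charpoly_quotient_dvd {k W A : Type*} [Field k]
    [AddCommGroup W] [Module k W] [FiniteDimensional k W]
    [AddCommGroup A] [Module k A] [FiniteDimensional k A]
    (φ : W →ₗ[k] W) (ψ : A →ₗ[k] A) (p : W →ₗ[k] A)
    (hp : Function.Surjective p) (hc : ∀ w, p (φ w) = ψ (p w)) :
    ψ.charpoly ∣ φ.charpoly := by
  classical
  set K := LinearMap.ker p with hK
  obtain ⟨C, hC⟩ := K.exists_isCompl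
  let e₁ : (K × C) ≃ₗ[k] W := Submodule.prodEquivOfIsCompl K C hC
  have hinj : Function.Injective (p ∘ₗ C.subtype) := by
    rw [← LinearMap.ker_eq_bot, LinearMap.ker_comp]
    exact Submodule.disjoint_iff_comap_eq_bot.mp hC.symm.disjoint
  have hsurj : Function.Surjective (p ∘ₗ C.subtype) := by
    intro a
    obtain ⟨w, rfl⟩ := hp a
    obtain ⟨y, hy, z, hz, rfl⟩ := Submodule.mem_sup.1 (hC.codisjoint.eq_top ▸ Submodule.mem_top :
      w ∈ K ⊔ C)
    refine ⟨⟨z, hz⟩, ?_⟩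
    simp only [LinearMap.comp_apply, Submodule.subtype_apply, map_add]
    have : p y = 0 := hy
    rw [this, zero_add]
  let eCA : C ≃ₗ[k] A := LinearEquiv.ofBijective (p ∘ₗ C.subtype) ⟨hinj, hsurj⟩
  let E : W ≃ₗ[k] K × A := e₁.symm.trans ((LinearEquiv.refl k K).prodCongr eCA)
  have hEsnd : ∀ w, (E w).2 = p w := by
    intro w
    have hw : w = ((e₁.symm w).1 : W) + ((e₁.symm w).2 : W) := by
      conv_lhs => rw [← e₁.apply_symm_apply w]
      exact Submodule.coe_prodEquivOfIsCompl' K C hC _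
    have h1 : p ((e₁.symm w).1 : W) = 0 := (e₁.symm w).1.2
    have h2 : (E w).2 = eCA (e₁.symm w).2 := rfl
    rw [h2]
    conv_rhs => rw [hw]
    rw [map_add, h1, zero_add]
    rfl
  let φ' := E.conj φ
  have hφ' : φ.charpoly = φ'.charpoly := (E.charpoly_conj φ).symm
  rw [hφ']
  have hsnd : ∀ x : K × A, (φ' x).2 = ψ x.2 := by
    intro x
    have : φ' x = E (φ (E.symm x)) := rfl
    rw [this, hEsnd, hc, ← hEsnd, E.apply_symm_apply]
  exact charpoly_snd_dvd (Module.finBasis k K) (Module.finBasis k A) φ' ψ hsnd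

/-- Let `L` be a `q`-elementary nondegenerate integral lattice
(`q` prime) and `f` an isometry of `L`.  Then the characteristic polynomial of
the induced `F_q`-linear map `f̄` on the discriminant group `A_L = L^∨/L`
divides the reduction mod `q` of the characteristic polynomial of `f` on `L`. -/
theorem charpoly_discriminant_dvd_charpoly_mod_q
    [FiniteDimensional ℚ V]
    (B : V →ₗ[ℚ] V →ₗ[ℚ] ℚ)
    (hsymm : ∀ x y, B x y = B y x)
    (hnd : ∀ v, (∀ w, B v w = 0) → v = 0)
    (L : Submodule ℤ V)
    (hfull : Submodule.span ℚ (L : Set V) = ⊤)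
    (hint : ∀ x ∈ L, ∀ y ∈ L, ∃ m : ℤ, B x y = m)
    -- the isometry `f`, preserving the form and the lattice
    (f : V ≃ₗ[ℚ] V) (hfB : ∀ x y, B (f x) (f y) = B x y)
    (hfL : Submodule.map (f.toLinearMap.restrictScalars ℤ) L = L)
    -- `L` is `q`-elementary
    (q : ℕ) [Fact q.Prime]
    (helem : ∀ v ∈ dualLattice B L, (q : ℤ) • v ∈ L)
    -- the discriminant group `A_L = L^∨/L` as an `F_q`-vector space, with the induced map `f̄`
    (A : Type*) [AddCommGroup A] [Module (ZMod q) A] [Module.Finite (ZMod q) A]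
    (pr : ↥(dualLattice B L) →+ A) (hpr : Function.Surjective pr)
    (hker : ∀ v : ↥(dualLattice B L), pr v = 0 ↔ (v : V) ∈ L)
    (fbar : A →ₗ[ZMod q] A)
    (hcompat : ∀ v w : ↥(dualLattice B L), (w : V) = f v → pr w = fbar (pr v))
    -- the matrix of `f` in a basis of `L`
    (m : ℕ) (b : Module.Basis (Fin m) ℤ L) (F : Matrix (Fin m) (Fin m) ℤ)
    (hF : ∀ j, f (b j) = ∑ i, (F i j : ℚ) • ((b i : V))) :
    LinearMap.charpoly fbar ∣ F.charpoly.map (Int.castRingHom (ZMod q)) := by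
  classical
  -- `L ≤ (dualLattice B L)`
  have hLD : L ≤ (dualLattice B L) := fun v hv x hx => hint v hv x hx
  -- `f` maps `L` onto `L`
  have hLf : ∀ x ∈ L, ∃ y ∈ L, f y = x := by
    intro x hx
    rw [← hfL] at hx
    obtain ⟨y, hy, hyx⟩ := hx
    exact ⟨y, hy, hyx⟩
  -- `f` maps `(dualLattice B L)` into `(dualLattice B L)`
  have hfD : ∀ v ∈ (dualLattice B L), (f.toLinearMap.restrictScalars ℤ) v ∈ (dualLattice B L) := by
    intro v hv x hx
    obtain ⟨y, hy, rfl⟩ := hLf x hx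
    obtain ⟨c, hc⟩ := hv y hy
    exact ⟨c, by rw [LinearMap.restrictScalars_apply, LinearEquiv.coe_coe, hfB]; exact hc⟩
  let g : ↥(dualLattice B L) →ₗ[ℤ] ↥(dualLattice B L) := (f.toLinearMap.restrictScalars ℤ).restrict hfD
  have hq0 : (q : ℚ) ≠ 0 := Nat.cast_ne_zero.mpr (Fact.out (p := q.Prime)).ne_zero
  -- `(dualLattice B L)` is contained in a finitely generated module
  let u : Fin m → V := fun i => (q : ℚ)⁻¹ • (b i : V)
  have hDN : (dualLattice B L) ≤ Submodule.span ℤ (Set.range u) := by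
    intro v hv
    have hqv : (q : ℤ) • v ∈ L := helem v hv
    set l : ↥L := ⟨(q : ℤ) • v, hqv⟩ with hl
    have hlv : (l : V) = (q : ℚ) • v := by
      rw [hl]
      show (q : ℤ) • v = (q : ℚ) • v
      rw [← Int.cast_smul_eq_zsmul ℚ]
      norm_num
    have hsum : (l : V) = ∑ i, b.repr l i • (b i : V) := by
      have h := congrArg (L.subtype) (b.sum_repr l)
      simp only [map_sum, map_zsmul, Submodule.subtype_apply] at h
      exact h.symm
    have hv' : v = ∑ i, b.repr l i • u i := by
      have : v = (q : ℚ)⁻¹ • (l : V) := by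
        rw [hlv, inv_smul_smul₀ hq0]
      rw [this, hsum, Finset.smul_sum]
      refine Finset.sum_congr rfl fun i _ => ?_
      rw [smul_comm]
    rw [hv']
    exact Submodule.sum_mem _ fun i _ =>
      Submodule.smul_mem _ _ (Submodule.subset_span ⟨i, rfl⟩)
  -- finiteness and freeness of `(dualLattice B L)`
  haveI hNfin : Module.Finite ℤ ↥(Submodule.span ℤ (Set.range u)) :=
    Module.Finite.span_of_finite ℤ (Set.finite_range u)
  haveI : Module.Finite ℤ ↥(dualLattice B L) := by
    have h1 : (Submodule.comap (Submodule.span ℤ (Set.range u)).subtype (dualLattice B L)).FG :=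
      IsNoetherian.noetherian _
    have h2 : (dualLattice B L).FG := by
      have h3 := h1.map (Submodule.span ℤ (Set.range u)).subtype
      rwa [Submodule.map_comap_subtype, inf_eq_right.mpr hDN] at h3
    exact Module.Finite.iff_fg.mpr h2
  haveI : NoZeroSMulDivisors ℤ V := by
    refine ⟨fun {c v} h => ?_⟩
    rcases eq_or_ne c 0 with rfl | hc
    · exact Or.inl rfl
    · right
      have h' : ((c : ℚ)) • v = 0 := by rw [Int.cast_smul_eq_zsmul]; exact h
      exact (smul_eq_zero.mp h').resolve_left (by exact_mod_cast hc)
  haveI : NoZeroSMulDivisors ℤ ↥(dualLattice B L) := by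
    refine ⟨fun {c v} h => ?_⟩
    have h' : c • (v : V) = 0 := by
      rw [← Submodule.coe_smul, h, Submodule.coe_zero]
    rcases smul_eq_zero.mp h' with hc | hv
    · exact Or.inl hc
    · exact Or.inr (Subtype.ext hv)
  haveI : Module.Free ℤ ↥(dualLattice B L) := Module.free_of_finite_type_torsion_free'
  -- a `ℤ`-basis of `(dualLattice B L)`
  let d := Module.Free.chooseBasis ℤ ↥(dualLattice B L)
  let dV : Module.Free.ChooseBasisIndex ℤ ↥(dualLattice B L) → V := fun i => (d i : V)
  -- every element of `(dualLattice B L)` is a rational combination of `dV`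
  have hDspan : ∀ w : ↥(dualLattice B L), (w : V) = ∑ i, ((d.repr w i : ℤ) : ℚ) • dV i := by
    intro w
    have h := congrArg ((dualLattice B L).subtype) (d.sum_repr w)
    simp only [map_sum, map_zsmul, Submodule.subtype_apply] at h
    rw [← h]
    exact Finset.sum_congr rfl fun i _ => (Int.cast_smul_eq_zsmul ℚ _ _).symm
  -- `dV` is a `ℚ`-basis of `V`
  have hdli : LinearIndependent ℚ dV := by
    rw [← LinearIndependent.iff_fractionRing (R := ℤ)]
    exact (d.linearIndependent).map' (dualLattice B L).subtype (Submodule.ker_subtype (dualLattice B L))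
  have hdsp : ⊤ ≤ Submodule.span ℚ (Set.range dV) := by
    rw [← hfull]
    refine Submodule.span_le.mpr fun v hv => ?_
    have hveq : v = ∑ i, ((d.repr ⟨v, hLD hv⟩ i : ℤ) : ℚ) • dV i := hDspan ⟨v, hLD hv⟩
    rw [hveq]
    exact Submodule.sum_mem _ fun i _ =>
      Submodule.smul_mem _ _ (Submodule.subset_span ⟨i, rfl⟩)
  let dQ : Module.Basis (Module.Free.ChooseBasisIndex ℤ ↥(dualLattice B L)) ℚ V := Module.Basis.mk hdli hdsp
  -- `bV` is a `ℚ`-basis of `V`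
  let bV : Fin m → V := fun i => (b i : V)
  have hbli : LinearIndependent ℚ bV := by
    rw [← LinearIndependent.iff_fractionRing (R := ℤ)]
    exact (b.linearIndependent).map' L.subtype (Submodule.ker_subtype L)
  have hLspan : ∀ w : ↥L, (w : V) = ∑ i, ((b.repr w i : ℤ) : ℚ) • bV i := by
    intro w
    have h := congrArg (L.subtype) (b.sum_repr w)
    simp only [map_sum, map_zsmul, Submodule.subtype_apply] at h
    rw [← h]
    exact Finset.sum_congr rfl fun i _ => (Int.cast_smul_eq_zsmul ℚ _ _).symm
  have hbsp : ⊤ ≤ Submodule.span ℚ (Set.range bV) := by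
    rw [← hfull]
    refine Submodule.span_le.mpr fun v hv => ?_
    have hveq : v = ∑ i, ((b.repr ⟨v, hv⟩ i : ℤ) : ℚ) • bV i := hLspan ⟨v, hv⟩
    rw [hveq]
    exact Submodule.sum_mem _ fun i _ =>
      Submodule.smul_mem _ _ (Submodule.subset_span ⟨i, rfl⟩)
  let bQ : Module.Basis (Fin m) ℚ V := Module.Basis.mk hbli hbsp
  -- matrices
  have hfd : LinearMap.toMatrix dQ dQ f.toLinearMap = (LinearMap.toMatrix d d g).map ⇑(Int.castRingHom ℚ) := by
    ext i j
    rw [LinearMap.toMatrix_apply, Matrix.map_apply]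
    have hgj : f.toLinearMap (dQ j) = ∑ i, (((LinearMap.toMatrix d d g) i j : ℤ) : ℚ) • dQ i := by
      have h1 : f.toLinearMap (dQ j) = ((g (d j) : ↥(dualLattice B L)) : V) := by
        rw [Module.Basis.mk_apply]; rfl
      rw [h1, hDspan (g (d j))]
      refine Finset.sum_congr rfl fun i _ => ?_
      rw [Module.Basis.mk_apply, LinearMap.toMatrix_apply]
    rw [hgj, dQ.repr_sum_self]
    simp
  have hfb : LinearMap.toMatrix bQ bQ f.toLinearMap = F.map ⇑(Int.castRingHom ℚ) := by
    ext i j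
    rw [LinearMap.toMatrix_apply, Matrix.map_apply]
    have hgj : f.toLinearMap (bQ j) = ∑ i, ((F i j : ℤ) : ℚ) • bQ i := by
      rw [Module.Basis.mk_apply]
      show f (bV j) = _
      rw [hF j]
      refine Finset.sum_congr rfl fun i _ => ?_
      rw [Module.Basis.mk_apply]
    rw [hgj, bQ.repr_sum_self]
    simp
  have hchar1 : (LinearMap.toMatrix d d g).charpoly.map (Int.castRingHom ℚ) = LinearMap.charpoly f.toLinearMap := by
    rw [← Matrix.charpoly_map, ← hfd, LinearMap.charpoly_toMatrix]
  have hchar2 : F.charpoly.map (Int.castRingHom ℚ) = LinearMap.charpoly f.toLinearMap := by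
    rw [← Matrix.charpoly_map, ← hfb, LinearMap.charpoly_toMatrix]
  have hGF : (LinearMap.toMatrix d d g).charpoly = F.charpoly :=
    Polynomial.map_injective _ Int.cast_injective (hchar1.trans hchar2.symm)
  -- pass to `ZMod q`
  let Mq : Matrix _ _ (ZMod q) := (LinearMap.toMatrix d d g).map ⇑(Int.castRingHom (ZMod q))
  let bfun := Pi.basisFun (ZMod q) (Module.Free.ChooseBasisIndex ℤ ↥(dualLattice B L))
  let φ := Matrix.toLin bfun bfun Mq
  have hφchar : φ.charpoly = F.charpoly.map (Int.castRingHom (ZMod q)) := by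
    rw [← LinearMap.charpoly_toMatrix φ bfun]
    show (LinearMap.toMatrix bfun bfun (Matrix.toLin bfun bfun Mq)).charpoly = _
    rw [LinearMap.toMatrix_toLin, Matrix.charpoly_map, hGF]
  let π := bfun.constr (ZMod q) (fun i => pr (d i))
  have hπ : ∀ x, π x = ∑ i, x i • pr (d i) := by
    intro x
    rw [Module.Basis.constr_apply_fintype]
    simp [bfun]
  have hπd : ∀ i, π (bfun i) = pr (d i) := fun i => bfun.constr_basis _ _ _
  have hπsmulℤ : ∀ c : Module.Free.ChooseBasisIndex ℤ ↥(dualLattice B L) → ℤ,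
      π (fun i => ((c i : ZMod q))) = pr (∑ i, c i • d i) := by
    intro c
    rw [hπ, map_sum]
    refine Finset.sum_congr rfl fun i _ => ?_
    rw [map_zsmul pr, Int.cast_smul_eq_zsmul]
  have hπsurj : Function.Surjective π := by
    intro a
    obtain ⟨v, rfl⟩ := hpr a
    exact ⟨fun i => ((d.repr v i : ℤ) : ZMod q), by rw [hπsmulℤ, d.sum_repr]⟩
  have hcomm : ∀ w, π (φ w) = fbar (π w) := by
    have hext : π ∘ₗ φ = (fbar : A →ₗ[ZMod q] A) ∘ₗ π := by
      apply bfun.ext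
      intro j
      rw [LinearMap.comp_apply, LinearMap.comp_apply]
      have hgdj : g (d j) = ∑ i, (LinearMap.toMatrix d d g) i j • d i := by
        conv_lhs => rw [← d.sum_repr (g (d j))]
        exact Finset.sum_congr rfl fun i _ => by rw [LinearMap.toMatrix_apply]
      have hL : π (φ (bfun j)) = pr (g (d j)) := by
        show π (Matrix.toLin bfun bfun Mq (bfun j)) = _
        rw [Matrix.toLin_self, map_sum]
        simp_rw [_root_.map_smul]
        have : ∀ i, Mq i j • π (bfun i) = ((LinearMap.toMatrix d d g) i j) • pr (d i) := by
          intro i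
          rw [hπd]
          show (((LinearMap.toMatrix d d g) i j : ℤ) : ZMod q) • pr (d i) = _
          rw [Int.cast_smul_eq_zsmul]
        rw [Finset.sum_congr rfl fun i _ => this i, hgdj, map_sum]
        refine Finset.sum_congr rfl fun i _ => ?_
        rw [map_zsmul pr]
      have hR : fbar (π (bfun j)) = pr (g (d j)) := by
        rw [hπd]
        exact (hcompat (d j) (g (d j)) rfl).symm
      rw [hL, hR]
    intro w
    exact LinearMap.congr_fun hext w
  have hdvd := charpoly_quotient_dvd φ fbar π hπsurj hcomm
  rwa [hφchar] at hdvd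
end

section
/- Let M ⊕ N ↪ L be a primitive extension of nondegenerate even lattices given by a glue map φ : H_M → H_N (an anti-isometry of subgroups H_M ⊆ A_M, H_N ⊆ A_N), and let f_M ∈ O(M), f_N ∈ O(N) be isometries whose direct sum extends to an isometry of L. If χ_M and χ_N denote the characteristic polynomials of f_M and f_N, then every prime dividing the order of the glue group H = L/(M ⊕ N) divides the resultant res(χ_M, χ_N). -/
open Polynomial

/-- The Sylvester matrix of two integer polynomials. -/
def sylvesterMatrix (p q : Polynomial ℤ) :
    Matrix (Fin (p.natDegree + q.natDegree)) (Fin (p.natDegree + q.natDegree)) ℤ :=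
  Matrix.of fun i j =>
    if (i : ℕ) < q.natDegree then
      (if (i : ℕ) ≤ (j : ℕ) then p.coeff ((j : ℕ) - (i : ℕ)) else 0)
    else
      (if (i : ℕ) - q.natDegree ≤ (j : ℕ) then
        q.coeff ((j : ℕ) - ((i : ℕ) - q.natDegree)) else 0)

/-- The resultant of two integer polynomials, as the determinant of their
Sylvester matrix. -/
def resultant (p q : Polynomial ℤ) : ℤ := (sylvesterMatrix p q).det

/-- A shifted row of coefficients of `p'`, summed against powers of `X`, gives
`X ^ a * p'`. -/
lemma rowsum_aux (p' : ℤ[X]) (D a : ℕ) (ha : a + p'.natDegree < D) :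
    (∑ j ∈ Finset.range D, (if a ≤ j then C (p'.coeff (j - a)) else 0) * X ^ j)
      = X ^ a * p' := by
  rw [Finset.range_eq_Ico, ← Finset.sum_Ico_consecutive _ (Nat.zero_le a) (by omega : a ≤ D)]
  have h1 : ∑ j ∈ Finset.Ico 0 a, (if a ≤ j then C (p'.coeff (j - a)) else 0) * X ^ j = 0 := by
    apply Finset.sum_eq_zero; intro j hj
    rw [Finset.mem_Ico] at hj
    rw [if_neg (by omega), zero_mul]
  rw [h1, zero_add, Finset.sum_Ico_eq_sum_range]
  have h2 : ∀ k ∈ Finset.range (D - a),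
      (if a ≤ a + k then C (p'.coeff (a + k - a)) else 0) * X ^ (a + k)
        = X ^ a * (C (p'.coeff k) * X ^ k) := by
    intro k _
    rw [if_pos (Nat.le_add_right a k), Nat.add_sub_cancel_left, pow_add]; ring
  rw [Finset.sum_congr rfl h2, ← Finset.mul_sum]
  congr 1
  conv_rhs => rw [p'.as_sum_range' (D - a) (by omega)]
  exact Finset.sum_congr rfl fun k _ => C_mul_X_pow_eq_monomial

/-- The resultant lies in the ideal generated by the two polynomials. -/
lemma resultant_eq_comb (p q : ℤ[X]) (h : 0 < p.natDegree + q.natDegree) :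
    ∃ A B : ℤ[X], A * p + B * q = C (_root_.resultant p q) := by
  classical
  set n := q.natDegree with hn
  set D := p.natDegree + q.natDegree with hD
  set S := sylvesterMatrix p q with hS
  set T : Matrix (Fin D) (Fin D) ℤ[X] := S.map (C : ℤ →+* ℤ[X]) with hT
  set V : Fin D → ℤ[X] := fun j => X ^ (j : ℕ) with hV
  have hW : ∀ i : Fin D, T.mulVec V i
      = if (i : ℕ) < n then X ^ (i : ℕ) * p else X ^ ((i : ℕ) - n) * q := by
    intro i
    have : T.mulVec V i = ∑ j : Fin D, C (S i j) * X ^ (j : ℕ) := by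
      simp [Matrix.mulVec, dotProduct, hT, hV]
    rw [this]
    by_cases hi : (i : ℕ) < n
    · have : ∀ j : Fin D, C (S i j) * X ^ (j : ℕ)
          = (if (i : ℕ) ≤ (j : ℕ) then C (p.coeff ((j : ℕ) - (i : ℕ))) else 0) * X ^ (j : ℕ) := by
        intro j
        have hi' : (i : ℕ) < q.natDegree := hi
        simp [hS, sylvesterMatrix, hi', apply_ite C, hn]
      rw [Finset.sum_congr rfl fun j _ => this j, if_pos hi]
      rw [Fin.sum_univ_eq_sum_range
        (fun j => (if (i : ℕ) ≤ j then C (p.coeff (j - (i : ℕ))) else 0) * X ^ j) D]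
      exact rowsum_aux p D i (by omega)
    · have : ∀ j : Fin D, C (S i j) * X ^ (j : ℕ)
          = (if (i : ℕ) - n ≤ (j : ℕ) then C (q.coeff ((j : ℕ) - ((i : ℕ) - n))) else 0)
              * X ^ (j : ℕ) := by
        intro j
        have hi' : ¬ (i : ℕ) < q.natDegree := hi
        simp [hS, sylvesterMatrix, hi', apply_ite C, hn]
      rw [Finset.sum_congr rfl fun j _ => this j, if_neg hi]
      rw [Fin.sum_univ_eq_sum_range
        (fun j => (if (i : ℕ) - n ≤ j then C (q.coeff (j - ((i : ℕ) - n))) else 0) * X ^ j) D]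
      have hiD := i.isLt
      exact rowsum_aux q D ((i : ℕ) - n) (by omega)
  have hdet : T.det = C (_root_.resultant p q) := ((C : ℤ →+* ℤ[X]).map_det S).symm
  set i0 : Fin D := ⟨0, h⟩ with hi0
  have hv : T.det • V = (Matrix.adjugate T).mulVec (T.mulVec V) := by
    rw [Matrix.mulVec_mulVec, Matrix.adjugate_mul, Matrix.smul_mulVec, Matrix.one_mulVec]
  have hcomp : C (_root_.resultant p q) = ∑ j : Fin D, Matrix.adjugate T i0 j * (T.mulVec V j) := by
    have := congrFun hv i0
    simp only [Pi.smul_apply, smul_eq_mul, hV] at this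
    rw [hdet] at this
    simpa [Matrix.mulVec, dotProduct, hi0, hV] using this
  refine ⟨∑ j : Fin D, if (j : ℕ) < n then Matrix.adjugate T i0 j * X ^ (j : ℕ) else 0,
    ∑ j : Fin D, if (j : ℕ) < n then 0 else Matrix.adjugate T i0 j * X ^ ((j : ℕ) - n), ?_⟩
  rw [hcomp, Finset.sum_mul, Finset.sum_mul, ← Finset.sum_add_distrib]
  refine Finset.sum_congr rfl fun j _ => ?_
  rw [hW j]
  split_ifs <;> ring

section Helpers
variable {R : Type*} [CommRing R] {L : Type*} [AddCommGroup L] [Module R L]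

lemma aeval_restrict_coe (g : L →ₗ[R] L) (M : Submodule R L) (h : ∀ x ∈ M, g x ∈ M)
    (p : R[X]) (u : M) :
    ((Polynomial.aeval (g.restrict h) p u : M) : L) = Polynomial.aeval g p u := by
  induction p using Polynomial.induction_on' with
  | add f g hf hg =>
    simp only [map_add, LinearMap.add_apply, Submodule.coe_add, hf, hg]
  | monomial k c =>
    rw [aeval_monomial, aeval_monomial, Module.End.mul_apply, Module.End.mul_apply,
      Module.algebraMap_end_apply, Module.algebraMap_end_apply, Module.End.pow_restrict]
    push_cast
    rw [LinearMap.restrict_coe_apply]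

lemma aeval_mem (g : L →ₗ[R] L) (M : Submodule R L) (h : ∀ x ∈ M, g x ∈ M)
    (p : R[X]) (u : L) (hu : u ∈ M) : Polynomial.aeval g p u ∈ M := by
  rw [← aeval_restrict_coe g M h p ⟨u, hu⟩]
  exact Submodule.coe_mem _

lemma aeval_charpoly_eq_zero [Nontrivial R] (g : L →ₗ[R] L) (M : Submodule R L)
    (h : ∀ x ∈ M, g x ∈ M)
    {m : ℕ} (bM : Module.Basis (Fin m) R M) (FM : Matrix (Fin m) (Fin m) R)
    (hFM : ∀ j, g (bM j : L) = ∑ i, FM i j • (bM i : L))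
    (u : L) (hu : u ∈ M) : Polynomial.aeval g FM.charpoly u = 0 := by
  set fM := g.restrict h with hfM'
  have hmat : LinearMap.toMatrix bM bM fM = FM := by
    ext i j
    have hc : fM (bM j) = ∑ i, FM i j • bM i := by
      apply Subtype.ext
      rw [LinearMap.restrict_coe_apply, hFM j]
      push_cast
      rfl
    simp [LinearMap.toMatrix_apply, hc, Module.Basis.repr_self, Finsupp.single_apply,
      Finset.sum_ite_eq]
  haveI : Module.Finite R M := Module.Finite.of_basis bM
  haveI : Module.Free R M := Module.Free.of_basis bM
  have hCH : Polynomial.aeval fM FM.charpoly = 0 := by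
    have hcp : fM.charpoly = FM.charpoly := by
      rw [← hmat, LinearMap.charpoly_toMatrix]
    rw [← hcp]
    exact LinearMap.aeval_self_charpoly fM
  have := aeval_restrict_coe g M h FM.charpoly ⟨u, hu⟩
  rw [← this, hCH]
  rfl

end Helpers

noncomputable def intBasisConvert {A : Type*} [AddCommGroup A] (inst : Module ℤ A) {ι : Type*}
    (b : @Module.Basis ι ℤ A _ _ (AddCommGroup.toIntModule A)) : @Module.Basis ι ℤ A _ _ inst := by
  have h : AddCommGroup.toIntModule A = inst := by
    haveI : Unique (Module ℤ A) := AddCommGroup.uniqueIntModule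
    exact Subsingleton.elim _ _
  exact h ▸ b

lemma intBasisConvert_apply {A : Type*} [AddCommGroup A] (inst : Module ℤ A) {ι : Type*}
    (b : @Module.Basis ι ℤ A _ _ (AddCommGroup.toIntModule A)) (i : ι) :
    (intBasisConvert inst b) i = b i := by
  have h : AddCommGroup.toIntModule A = inst := by
    haveI : Unique (Module ℤ A) := AddCommGroup.uniqueIntModule
    exact Subsingleton.elim _ _
  subst h
  rfl

/-- Let `M ⊕ N ↪ L` be a primitive extension of nondegenerate even
lattices and let `f_M ⊕ f_N` extend to an isometry `f` of `L`.  If `χ_M`, `χ_N`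
are the characteristic polynomials of `f_M = f|M` and `f_N = f|N` (computed as the
characteristic polynomials of their matrices in bases of `M` and `N`), then every
prime dividing the order of the glue group `H = L/(M ⊕ N)` divides
`res(χ_M, χ_N)`. -/
theorem prime_dvd_glue_dvd_resultant
    (L : Type*) [AddCommGroup L] [Module ℤ L] [Module.Free ℤ L] [Module.Finite ℤ L]
    (B : L →ₗ[ℤ] L →ₗ[ℤ] ℤ)
    (hsymm : ∀ x y, B x y = B y x)
    (hnd : ∀ v, (∀ w, B v w = 0) → v = 0)
    (heven : ∀ x, ∃ m : ℤ, B x x = 2 * m)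
    (M N : Submodule ℤ L)
    (hMprim : ∀ x : L, ∀ c : ℤ, c ≠ 0 → c • x ∈ M → x ∈ M)
    (hNprim : ∀ x : L, ∀ c : ℤ, c ≠ 0 → c • x ∈ N → x ∈ N)
    (hperp : ∀ x ∈ M, ∀ y ∈ N, B x y = 0)
    (hMperp : ∀ x : L, (∀ y ∈ N, B x y = 0) → x ∈ M)
    (hNperp : ∀ x : L, (∀ y ∈ M, B x y = 0) → x ∈ N)
    (hindex : Finite (L ⧸ (M ⊔ N)))
    -- the isometry `f = f_M ⊕ f_N` of `L`
    (f : L ≃ₗ[ℤ] L) (hfB : ∀ x y, B (f x) (f y) = B x y)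
    (hfM : ∀ x ∈ M, f x ∈ M) (hfN : ∀ x ∈ N, f x ∈ N)
    -- matrices of `f|M` and `f|N` in bases of `M` and `N`
    (m n : ℕ) (bM : Module.Basis (Fin m) ℤ M) (bN : Module.Basis (Fin n) ℤ N)
    (FM : Matrix (Fin m) (Fin m) ℤ) (FN : Matrix (Fin n) (Fin n) ℤ)
    (hFM : ∀ j, f (bM j : L) = ∑ i, FM i j • (bM i : L))
    (hFN : ∀ j, f (bN j : L) = ∑ i, FN i j • (bN i : L)) :
    ∀ r : ℕ, r.Prime → r ∣ Nat.card (L ⧸ (M ⊔ N)) →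
      (r : ℤ) ∣ _root_.resultant FM.charpoly FN.charpoly := by
  intro r hr hdvd
  haveI : Fact r.Prime := ⟨hr⟩
  obtain ⟨qx, hqx⟩ := exists_prime_addOrderOf_dvd_card' (G := L ⧸ (M ⊔ N)) r hdvd
  obtain ⟨x, rfl⟩ := Submodule.Quotient.mk_surjective _ qx
  set g : L →ₗ[ℤ] L := f.toLinearMap with hg
  letI : Algebra ℤ (L →ₗ[ℤ] L) :=
    @Module.End.instAlgebra ℤ ℤ L _ _ _ _ _ (@smulCommClass_self ℤ L _
      (@DistribMulAction.toMulAction ℤ L _ _ (@Module.toDistribMulAction ℤ L _ _ ‹Module ℤ L›)))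
      _ (@IsScalarTower.left ℤ L _
        (@DistribMulAction.toMulAction ℤ L _ _ (@Module.toDistribMulAction ℤ L _ _ ‹Module ℤ L›)))
  have hgM : ∀ a ∈ M, g a ∈ M := hfM
  have hgN : ∀ a ∈ N, g a ∈ N := hfN
  set χM := FM.charpoly with hχM
  set χN := FN.charpoly with hχN
  set bM' := intBasisConvert M.module bM with hbM'
  set bN' := intBasisConvert N.module bN with hbN'
  have hq0 : r • (Submodule.Quotient.mk x : L ⧸ (M ⊔ N)) = 0 := by
    rw [← hqx]; exact addOrderOf_nsmul_eq_zero _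
  have hrx : r • x ∈ M ⊔ N := by
    have h1 : (M ⊔ N).mkQ (r • x) = 0 := by
      rw [map_nsmul, Submodule.mkQ_apply, hq0]
    rwa [Submodule.mkQ_apply, Submodule.Quotient.mk_eq_zero] at h1
  obtain ⟨u, hu, v, hv, huv⟩ := Submodule.mem_sup.mp hrx
  have hrne : (r : ℤ) ≠ 0 := Int.natCast_ne_zero.mpr hr.ne_zero
  have hCHM : ∀ w ∈ M, Polynomial.aeval g χM w = 0 := by
    intro w hw
    refine aeval_charpoly_eq_zero g M hgM bM' FM (fun j => ?_) w hw
    have h1 := hFM j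
    simp only [← Int.cast_smul_eq_zsmul ℤ, Int.cast_id] at h1
    simpa only [hbM', intBasisConvert_apply, hg, LinearEquiv.coe_coe] using h1
  have hCHN : ∀ w ∈ N, Polynomial.aeval g χN w = 0 := by
    intro w hw
    refine aeval_charpoly_eq_zero g N hgN bN' FN (fun j => ?_) w hw
    have h1 := hFN j
    simp only [← Int.cast_smul_eq_zsmul ℤ, Int.cast_id] at h1
    simpa only [hbN', intBasisConvert_apply, hg, LinearEquiv.coe_coe] using h1
  have hy : Polynomial.aeval g χM x ∈ N := by
    apply hNprim _ (r : ℤ) hrne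
    rw [natCast_zsmul, ← map_nsmul (Polynomial.aeval g χM) r x, ← huv, map_add,
      hCHM u hu, zero_add]
    exact aeval_mem g N hgN χM v hv
  have hz : Polynomial.aeval g χN x ∈ M := by
    apply hMprim _ (r : ℤ) hrne
    rw [natCast_zsmul, ← map_nsmul (Polynomial.aeval g χN) r x, ← huv, map_add,
      hCHN v hv, add_zero]
    exact aeval_mem g M hgM χN u hu
  by_cases hd : 0 < χM.natDegree + χN.natDegree
  · obtain ⟨A, Bq, hAB⟩ := resultant_eq_comb χM χN hd
    set res := _root_.resultant χM χN with hresdef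
    have hresx : res • x ∈ M ⊔ N := by
      have e2 : Polynomial.aeval g (C res) x
          = Polynomial.aeval g A (Polynomial.aeval g χM x)
            + Polynomial.aeval g Bq (Polynomial.aeval g χN x) := by
        rw [← hAB, map_add, map_mul, map_mul]
        simp [Module.End.mul_apply, LinearMap.add_apply]
      have e3 : res • x = Polynomial.aeval g (C res) x := by
        rw [aeval_C, Module.algebraMap_end_apply, ← Int.cast_smul_eq_zsmul ℤ res x,
          Int.cast_id]
      rw [e3, e2]
      exact Submodule.add_mem _ (Submodule.mem_sup_right (aeval_mem g N hgN A _ hy))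
        (Submodule.mem_sup_left (aeval_mem g M hgM Bq _ hz))
    have h4 : ((res.natAbs : ℤ)) • x ∈ M ⊔ N := by
      rcases Int.natAbs_eq res with he | he
      · rw [← he]; exact hresx
      · rw [show ((res.natAbs : ℤ)) = -res by omega, neg_zsmul]
        exact Submodule.neg_mem _ hresx
    have h5 : res.natAbs • x ∈ M ⊔ N := by rwa [natCast_zsmul] at h4
    have h6 : res.natAbs • (Submodule.Quotient.mk x : L ⧸ (M ⊔ N)) = 0 := by
      have h7 : (M ⊔ N).mkQ (res.natAbs • x) = 0 := by
        rw [Submodule.mkQ_apply, Submodule.Quotient.mk_eq_zero]; exact h5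
      rwa [map_nsmul, Submodule.mkQ_apply] at h7
    have h7 := addOrderOf_dvd_of_nsmul_eq_zero h6
    rw [hqx] at h7
    exact dvd_trans (Int.ofNat_dvd.mpr h7) (Int.natAbs_dvd.mpr dvd_rfl)
  · exfalso
    push_neg at hd
    have hMmon : χM.Monic := FM.charpoly_monic
    have hMone : χM = 1 := hMmon.natDegree_eq_zero.mp (by omega)
    have hxN : x ∈ N := by
      have h8 := hy
      rwa [hMone, map_one, Module.End.one_apply] at h8
    have hq0' : (Submodule.Quotient.mk x : L ⧸ (M ⊔ N)) = 0 := by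
      rw [Submodule.Quotient.mk_eq_zero]
      exact Submodule.mem_sup_right hxN
    rw [hq0', addOrderOf_zero] at hqx
    exact hr.one_lt.ne' hqx.symm
end

section
/- Let P ⊂ A ⊗ κ be a strictly characteristic subspace, where A is a 2σ-dimensional F_p-vector space with nondegenerate symmetric bilinear form, κ algebraically closed of characteristic p, and ψ = id ⊗ Frob_κ. Then l = P ∩ ψ(P) ∩ ⋯ ∩ ψ^{σ-1}(P) is one-dimensional, P = l + ψ^{-1}(l) + ⋯ + ψ^{-(σ-1)}(l), and l + ψ(l) + ⋯ + ψ^{2σ-1}(l) = A ⊗ κ. -/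
open TensorProduct

set_option linter.unusedSectionVars false
set_option maxHeartbeats 1000000

section Machinery

open Function Module Submodule

namespace SCLAux

variable {K : Type*} [Field K] {V : Type*} [AddCommGroup V] [Module K V]

section Maps

variable (φ : K ≃+* K) (f : V → V)

/-- image of a submodule under a `φ`-semilinear map (with `φ` surjective) -/
def smap (hfa : ∀ x y, f (x + y) = f x + f y)
    (hfs : ∀ c x, f (c • x) = φ c • f x) (Q : Submodule K V) : Submodule K V where
  carrier := f '' Q
  add_mem' := by
    rintro _ _ ⟨x, hx, rfl⟩ ⟨y, hy, rfl⟩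
    exact ⟨x + y, Q.add_mem hx hy, hfa x y⟩
  zero_mem' := by
    refine ⟨0, Q.zero_mem, ?_⟩
    have h := hfa 0 0
    rw [add_zero] at h
    have h2 : f 0 + 0 = f 0 + f 0 := by rw [add_zero]; exact h
    exact (add_left_cancel h2).symm
  smul_mem' := by
    rintro c _ ⟨x, hx, rfl⟩
    refine ⟨φ.symm c • x, Q.smul_mem _ hx, ?_⟩
    rw [hfs, φ.apply_symm_apply]

/-- preimage of a submodule under a `φ`-semilinear map -/
def scomap (hfa : ∀ x y, f (x + y) = f x + f y)
    (hfs : ∀ c x, f (c • x) = φ c • f x) (Q : Submodule K V) : Submodule K V where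
  carrier := f ⁻¹' Q
  add_mem' := by
    intro x y hx hy
    simp only [Set.mem_preimage] at *
    rw [hfa]; exact Q.add_mem hx hy
  zero_mem' := by
    have h := hfa 0 0
    rw [add_zero] at h
    have h2 : f 0 + 0 = f 0 + f 0 := by rw [add_zero]; exact h
    have : f 0 = 0 := (add_left_cancel h2).symm
    simp [Set.mem_preimage, this]
  smul_mem' := by
    intro c x hx
    simp only [Set.mem_preimage] at *
    rw [hfs]; exact Q.smul_mem _ hx

variable {φ f}
variable (hfa : ∀ x y, f (x + y) = f x + f y)
    (hfs : ∀ c x, f (c • x) = φ c • f x) (hfb : Function.Bijective f)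

include hfa hfs hfb

@[simp] lemma coe_smap (Q : Submodule K V) : (smap φ f hfa hfs Q : Set V) = f '' Q := rfl

@[simp] lemma coe_scomap (Q : Submodule K V) : (scomap φ f hfa hfs Q : Set V) = f ⁻¹' Q := rfl

lemma span_image (Q : Submodule K V) :
    Submodule.span K (f '' Q) = smap φ f hfa hfs Q := by
  rw [← coe_smap hfa hfs hfb]; exact Submodule.span_eq _

lemma smap_mono {Q R : Submodule K V} (h : Q ≤ R) :
    smap φ f hfa hfs Q ≤ smap φ f hfa hfs R :=
  Set.image_mono h

lemma smap_sup (Q R : Submodule K V) :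
    smap φ f hfa hfs (Q ⊔ R) = smap φ f hfa hfs Q ⊔ smap φ f hfa hfs R := by
  apply le_antisymm
  · rintro _ ⟨x, hx, rfl⟩
    obtain ⟨q, hq, r, hr, rfl⟩ := Submodule.mem_sup.mp hx
    rw [hfa]
    exact Submodule.add_mem_sup ⟨q, hq, rfl⟩ ⟨r, hr, rfl⟩
  · refine sup_le (smap_mono hfa hfs hfb le_sup_left) (smap_mono hfa hfs hfb le_sup_right)

lemma smap_inf (Q R : Submodule K V) :
    smap φ f hfa hfs (Q ⊓ R) = smap φ f hfa hfs Q ⊓ smap φ f hfa hfs R := by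
  apply le_antisymm
  · exact le_inf (smap_mono hfa hfs hfb inf_le_left) (smap_mono hfa hfs hfb inf_le_right)
  · rintro x ⟨⟨q, hq, hqx⟩, ⟨r, hr, hrx⟩⟩
    have : q = r := hfb.1 (hqx.trans hrx.symm)
    exact ⟨q, ⟨hq, this ▸ hr⟩, hqx⟩

lemma smap_top : smap φ f hfa hfs (⊤ : Submodule K V) = ⊤ := by
  rw [eq_top_iff]
  intro x _
  obtain ⟨y, rfl⟩ := hfb.2 x
  exact ⟨y, trivial, rfl⟩

lemma smap_bot : smap φ f hfa hfs (⊥ : Submodule K V) = ⊥ := by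
  apply le_antisymm _ bot_le
  rintro _ ⟨x, hx, rfl⟩
  have hx0 : x = 0 := by simpa using hx
  subst hx0
  have h := hfa 0 0
  rw [add_zero] at h
  have h2 : f 0 + 0 = f 0 + f 0 := by rw [add_zero]; exact h
  have h0 : f 0 = 0 := (add_left_cancel h2).symm
  simp [h0]

lemma smap_scomap (Q : Submodule K V) :
    smap φ f hfa hfs (scomap φ f hfa hfs Q) = Q := by
  apply Submodule.ext
  intro x
  constructor
  · rintro ⟨y, hy, rfl⟩; exact hy
  · intro hx
    obtain ⟨y, rfl⟩ := hfb.2 x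
    exact ⟨y, hx, rfl⟩

lemma scomap_le_iff {Q R : Submodule K V} :
    scomap φ f hfa hfs Q ≤ R ↔ Q ≤ smap φ f hfa hfs R := by
  constructor
  · intro h x hx
    obtain ⟨y, rfl⟩ := hfb.2 x
    exact ⟨y, h hx, rfl⟩
  · intro h x hx
    obtain ⟨y, hy, hxy⟩ := h hx
    rwa [← hfb.1 hxy]

lemma finrank_smap [FiniteDimensional K V] (Q : Submodule K V) :
    finrank K (smap φ f hfa hfs Q) = finrank K Q := by
  have key : Module.rank K Q = Module.rank K (smap φ f hfa hfs Q) := by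
    refine rank_eq_of_equiv_equiv (ZeroHom.mk φ.toFun φ.map_zero)
      (AddEquiv.mk (Equiv.ofBijective
        (fun x : Q => (⟨f x, ⟨x, x.2, rfl⟩⟩ : smap φ f hfa hfs Q)) ⟨?_, ?_⟩) ?_)
      φ.bijective ?_
    · intro x y hxy
      exact Subtype.ext (hfb.1 (congrArg Subtype.val hxy))
    · rintro ⟨_, ⟨y, hy, rfl⟩⟩
      exact ⟨⟨y, hy⟩, rfl⟩
    · intro x y
      exact Subtype.ext (hfa x y)
    · intro c x
      exact Subtype.ext (hfs c x)
  unfold Module.finrank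
  rw [key]

lemma smap_span_singleton (w : V) :
    smap φ f hfa hfs (Submodule.span K {w}) = Submodule.span K {f w} := by
  apply le_antisymm
  · rintro _ ⟨x, hx, rfl⟩
    obtain ⟨c, rfl⟩ := Submodule.mem_span_singleton.mp hx
    rw [hfs]
    exact Submodule.smul_mem _ _ (Submodule.mem_span_singleton_self _)
  · rw [Submodule.span_le, Set.singleton_subset_iff]
    exact ⟨w, Submodule.mem_span_singleton_self _, rfl⟩

lemma smap_finset_sup {ι : Type*} (s : Finset ι) (g : ι → Submodule K V) :
    smap φ f hfa hfs (s.sup g) = s.sup (fun i => smap φ f hfa hfs (g i)) := by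
  induction s using Finset.cons_induction with
  | empty => simpa using smap_bot hfa hfs hfb
  | cons a s ha ih => rw [Finset.sup_cons, Finset.sup_cons, smap_sup hfa hfs hfb, ih]

lemma smap_finset_inf {ι : Type*} (s : Finset ι) (g : ι → Submodule K V) :
    smap φ f hfa hfs (s.inf g) = s.inf (fun i => smap φ f hfa hfs (g i)) := by
  induction s using Finset.cons_induction with
  | empty => simpa using smap_top hfa hfs hfb
  | cons a s ha ih => rw [Finset.inf_cons, Finset.inf_cons, smap_inf hfa hfs hfb, ih]

lemma smap_orthogonal {B : LinearMap.BilinForm K V}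
    (hBf : ∀ x y, B (f x) (f y) = φ (B x y)) (Q : Submodule K V) :
    smap φ f hfa hfs (B.orthogonal Q) = B.orthogonal (smap φ f hfa hfs Q) := by
  apply le_antisymm
  · rintro _ ⟨x, hx, rfl⟩
    rintro _ ⟨q, hq, rfl⟩
    show B (f q) (f x) = 0
    rw [hBf, hx q hq, map_zero]
  · intro y hy
    obtain ⟨x, rfl⟩ := hfb.2 y
    refine ⟨x, ?_, rfl⟩
    intro q hq
    have h := hy (f q) ⟨q, hq, rfl⟩
    show B q x = 0
    have : φ (B q x) = 0 := by rw [← hBf]; exact h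
    have := congrArg φ.symm this
    rwa [φ.symm_apply_apply, map_zero] at this

-- iterate lemmas

lemma smap_iter_mono (i : ℕ) {Q R : Submodule K V} (h : Q ≤ R) :
    (smap φ f hfa hfs)^[i] Q ≤ (smap φ f hfa hfs)^[i] R := by
  induction i generalizing Q R with
  | zero => simpa using h
  | succ n ih =>
    rw [Function.iterate_succ_apply', Function.iterate_succ_apply']
    exact smap_mono hfa hfs hfb (ih h)

lemma smap_iter_scomap_iter (i : ℕ) (Q : Submodule K V) :
    (smap φ f hfa hfs)^[i] ((scomap φ f hfa hfs)^[i] Q) = Q := by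
  induction i generalizing Q with
  | zero => simp
  | succ n ih =>
    rw [Function.iterate_succ_apply', Function.iterate_succ_apply,
      ih (scomap φ f hfa hfs Q), smap_scomap hfa hfs hfb]

lemma scomap_iter_le_iff (i : ℕ) {Q R : Submodule K V} :
    (scomap φ f hfa hfs)^[i] Q ≤ R ↔ Q ≤ (smap φ f hfa hfs)^[i] R := by
  induction i generalizing Q R with
  | zero => simp
  | succ n ih =>
    rw [Function.iterate_succ_apply, Function.iterate_succ_apply']
    rw [ih, scomap_le_iff hfa hfs hfb]

lemma smap_iter_top (i : ℕ) : (smap φ f hfa hfs)^[i] (⊤ : Submodule K V) = ⊤ := by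
  induction i with
  | zero => simp
  | succ n ih => rw [Function.iterate_succ_apply', ih, smap_top hfa hfs hfb]

lemma coe_smap_iter (i : ℕ) (Q : Submodule K V) :
    (((smap φ f hfa hfs)^[i] Q : Submodule K V) : Set V) = f^[i] '' Q := by
  induction i with
  | zero => simp
  | succ n ih =>
    rw [Function.iterate_succ_apply', coe_smap hfa hfs hfb, ih,
      Function.iterate_succ' f n, Set.image_comp]

lemma coe_scomap_iter (i : ℕ) (Q : Submodule K V) :
    (((scomap φ f hfa hfs)^[i] Q : Submodule K V) : Set V) = f^[i] ⁻¹' Q := by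
  induction i generalizing Q with
  | zero => simp
  | succ n ih =>
    rw [Function.iterate_succ_apply, ih (scomap φ f hfa hfs Q),
      coe_scomap hfa hfs hfb, ← Set.preimage_comp, ← Function.iterate_succ' f n]

lemma finrank_smap_iter [FiniteDimensional K V] (i : ℕ) (Q : Submodule K V) :
    finrank K ((smap φ f hfa hfs)^[i] Q) = finrank K Q := by
  induction i with
  | zero => rfl
  | succ n ih => rw [Function.iterate_succ_apply', finrank_smap hfa hfs hfb, ih]

end Maps

section Orth

variable {B : LinearMap.BilinForm K V}

lemma orthogonal_sup (Q R : Submodule K V) :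
    B.orthogonal (Q ⊔ R) = B.orthogonal Q ⊓ B.orthogonal R := by
  apply le_antisymm
  · exact le_inf (B.orthogonal_le le_sup_left) (B.orthogonal_le le_sup_right)
  · rintro x ⟨hxQ, hxR⟩
    intro n hn
    obtain ⟨q, hq, r, hr, rfl⟩ := Submodule.mem_sup.mp hn
    have h1 := hxQ q hq
    have h2 := hxR r hr
    rw [map_add, LinearMap.add_apply, h1, h2, add_zero]

lemma orthogonal_bot : B.orthogonal (⊥ : Submodule K V) = ⊤ := by
  rw [eq_top_iff]
  intro x _ n hn
  rw [Submodule.mem_bot] at hn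
  simp [LinearMap.BilinForm.IsOrtho, hn]

lemma orthogonal_finset_sup {ι : Type*} (s : Finset ι) (g : ι → Submodule K V) :
    B.orthogonal (s.sup g) = s.inf (fun i => B.orthogonal (g i)) := by
  induction s using Finset.cons_induction with
  | empty => simp [orthogonal_bot]
  | cons a s ha ih => rw [Finset.sup_cons, Finset.inf_cons, orthogonal_sup, ih]

end Orth


section Main

variable {φ : K ≃+* K} {f : V → V}
variable (hfa : ∀ x y, f (x + y) = f x + f y)
    (hfs : ∀ c x, f (c • x) = φ c • f x) (hfb : Function.Bijective f)
variable [FiniteDimensional K V] {B : LinearMap.BilinForm K V}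

include hfa hfs hfb

theorem main (hBrefl : B.IsRefl) (hBnd : B.Nondegenerate)
    (hBf : ∀ x y, B (f x) (f y) = φ (B x y))
    (σ : ℕ) (hσ : 0 < σ) (hV : finrank K V = 2 * σ)
    (P : Submodule K V) (hPdim : finrank K P = σ)
    (hS1 : finrank K ↥(P ⊔ smap φ f hfa hfs P) = σ + 1)
    (hPiso : P ≤ B.orthogonal P)
    (hstrict : ∀ Q : Submodule K V, (∀ j : ℕ, (smap φ f hfa hfs)^[j] P ≤ Q) → Q = ⊤) :
    finrank K ↥((Finset.range σ).inf fun j => (smap φ f hfa hfs)^[j] P) = 1 ∧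
    P = (Finset.range σ).sup (fun i => (scomap φ f hfa hfs)^[i]
        ((Finset.range σ).inf fun j => (smap φ f hfa hfs)^[j] P)) ∧
    (Finset.range (2 * σ)).sup (fun i => (smap φ f hfa hfs)^[i]
        ((Finset.range σ).inf fun j => (smap φ f hfa hfs)^[j] P)) = ⊤ := by
  classical
  set m : Submodule K V → Submodule K V := smap φ f hfa hfs with hm
  set sc : Submodule K V → Submodule K V := scomap φ f hfa hfs with hsc
  have hm_mono : ∀ {Q R : Submodule K V}, Q ≤ R → m Q ≤ m R := by
    intro Q R h; rw [hm]; exact smap_mono hfa hfs hfb h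
  have hiter_mono : ∀ (i : ℕ) {Q R : Submodule K V}, Q ≤ R → m^[i] Q ≤ m^[i] R := by
    intro i Q R h; rw [hm]; exact smap_iter_mono hfa hfs hfb i h
  have hfinm : ∀ Q : Submodule K V, finrank K (m Q) = finrank K Q := by
    intro Q; rw [hm]; exact finrank_smap hfa hfs hfb Q
  have hmsup : ∀ Q R : Submodule K V, m (Q ⊔ R) = m Q ⊔ m R := by
    intro Q R; rw [hm]; exact smap_sup hfa hfs hfb Q R
  have hmsupF : ∀ (s : Finset ℕ) (g : ℕ → Submodule K V),
      m (s.sup g) = s.sup (fun i => m (g i)) := by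
    intro s g; rw [hm]; exact smap_finset_sup hfa hfs hfb s g
  have hminfF : ∀ (s : Finset ℕ) (g : ℕ → Submodule K V),
      m (s.inf g) = s.inf (fun i => m (g i)) := by
    intro s g; rw [hm]; exact smap_finset_inf hfa hfs hfb s g
  have hmspan : ∀ w : V, m (Submodule.span K {w}) = Submodule.span K {f w} := by
    intro w; rw [hm]; exact smap_span_singleton hfa hfs hfb w
  have hmitop : ∀ i : ℕ, m^[i] (⊤ : Submodule K V) = ⊤ := by
    intro i; rw [hm]; exact smap_iter_top hfa hfs hfb i
  have hmisci : ∀ (i : ℕ) (Q : Submodule K V), m^[i] (sc^[i] Q) = Q := by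
    intro i Q; rw [hm, hsc]; exact smap_iter_scomap_iter hfa hfs hfb i Q
  have hsci_le : ∀ (i : ℕ) {Q R : Submodule K V}, sc^[i] Q ≤ R ↔ Q ≤ m^[i] R := by
    intro i Q R; rw [hm, hsc]; exact scomap_iter_le_iff hfa hfs hfb i
  have hmorth : ∀ Q : Submodule K V, m (B.orthogonal Q) = B.orthogonal (m Q) := by
    intro Q; rw [hm]; exact smap_orthogonal hfa hfs hfb hBf Q
  have hmiF : ∀ (t : ℕ) (s : Finset ℕ) (g : ℕ → Submodule K V),
      m^[t] (s.sup g) = s.sup (fun i => m^[t] (g i)) := by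
    intro t
    induction t with
    | zero => intro s g; simp
    | succ n ih =>
      intro s g
      rw [Function.iterate_succ_apply', ih, hmsupF]
      apply Finset.sup_congr rfl
      intro i _
      rw [Function.iterate_succ_apply']
  have hspanrank : ∀ w : V, finrank K (Submodule.span K {w}) ≤ 1 := by
    intro w
    by_cases hw : w = 0
    · subst hw
      rw [Submodule.span_zero_singleton]
      simp
    · rw [finrank_span_singleton hw]
  set S : ℕ → Submodule K V := fun i => (Finset.range (i + 1)).sup (fun j => m^[j] P) with hS
  set T : ℕ → Submodule K V := fun i => (Finset.range (i + 1)).inf (fun j => m^[j] P) with hT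
  have hσ1 : σ - 1 + 1 = σ := by omega
  have hS0 : S 0 = P := by simp [hS]
  have hT0 : T 0 = P := by simp [hT]
  have hjleS : ∀ i j : ℕ, j ≤ i → m^[j] P ≤ S i := by
    intro i j hj
    simp only [hS]
    have hmem : j ∈ Finset.range (i + 1) := Finset.mem_range.mpr (by omega)
    exact Finset.le_sup (f := fun j => m^[j] P) hmem
  have hPleS : ∀ i, P ≤ S i := by
    intro i
    have h := hjleS i 0 (by omega)
    simpa using h
  have hTlej : ∀ i j : ℕ, j ≤ i → T i ≤ m^[j] P := by
    intro i j hj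
    simp only [hT]
    have hmem : j ∈ Finset.range (i + 1) := Finset.mem_range.mpr (by omega)
    exact Finset.inf_le (f := fun j => m^[j] P) hmem
  have hTmono : ∀ {i i' : ℕ}, i ≤ i' → T i' ≤ T i := by
    intro i i' h
    simp only [hT]
    apply Finset.le_inf
    intro j hj
    rw [Finset.mem_range] at hj
    have hmem : j ∈ Finset.range (i' + 1) := Finset.mem_range.mpr (by omega)
    exact Finset.inf_le (f := fun j => m^[j] P) hmem
  have hSsucc2 : ∀ i, S (i + 1) = P ⊔ m (S i) := by
    intro i
    apply le_antisymm
    · simp only [hS]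
      apply Finset.sup_le
      intro j hj
      rw [Finset.mem_range] at hj
      match j with
      | 0 => simpa using le_sup_left
      | Nat.succ k =>
        have h1 : m^[k] P ≤ (Finset.range (i + 1)).sup (fun j => m^[j] P) :=
          Finset.le_sup (f := fun j => m^[j] P) (Finset.mem_range.mpr (by omega : k < i + 1))
        have h2 := hm_mono h1
        calc m^[k + 1] P = m (m^[k] P) := Function.iterate_succ_apply' m k P
          _ ≤ m ((Finset.range (i + 1)).sup (fun j => m^[j] P)) := h2
          _ ≤ _ := le_sup_right
    · apply sup_le (hPleS (i + 1))
      simp only [hS]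
      rw [hmsupF]
      apply Finset.sup_le
      intro j hj
      rw [Finset.mem_range] at hj
      have h1 : m (m^[j] P) = m^[j + 1] P := (Function.iterate_succ_apply' m j P).symm
      rw [h1]
      have hmem : j + 1 ∈ Finset.range (i + 1 + 1) := Finset.mem_range.mpr (by omega)
      exact Finset.le_sup (f := fun j => m^[j] P) hmem
  have hS0le1 : S 0 ≤ S 1 := by
    rw [hSsucc2 0, hS0]
    exact le_sup_left
  have hSrank1 : finrank K (S 1) = σ + 1 := by
    rw [hSsucc2 0, hS0]
    exact hS1
  have hSrank0 : finrank K (S 0) = σ := by rw [hS0, hPdim]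
  have hex : ∃ v, v ∈ S 1 ∧ v ∉ S 0 := by
    by_contra hcon
    push_neg at hcon
    have heq : S 1 = S 0 := le_antisymm (fun x hx => hcon x hx) hS0le1
    rw [heq, hSrank0] at hSrank1
    omega
  obtain ⟨v, hv1, hv0⟩ := hex
  have hvS1 : S 0 ⊔ Submodule.span K {v} = S 1 := by
    apply Submodule.eq_of_le_of_finrank_le
    · exact sup_le hS0le1 ((Submodule.span_singleton_le_iff_mem v _).mpr hv1)
    · have hlt : S 0 < S 0 ⊔ Submodule.span K {v} := by
        rw [left_lt_sup]
        intro hcon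
        exact hv0 (hcon (Submodule.mem_span_singleton_self v))
      have := Submodule.finrank_lt_finrank_of_lt hlt
      omega
  have hSv : ∀ i, S (i + 1) = S i ⊔ Submodule.span K {f^[i] v} := by
    intro i
    induction i with
    | zero => simpa using hvS1.symm
    | succ n ih =>
      rw [hSsucc2 (n + 1), ih, hmsup, hmspan, ← sup_assoc, ← hSsucc2 n,
        ← Function.iterate_succ_apply' f n v, ih]
  have hSrank : ∀ i, i ≤ σ → finrank K (S i) = σ + i := by
    intro i
    induction i with
    | zero => intro _; simpa using hSrank0
    | succ n ih =>
      intro hn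
      have hihr := ih (by omega)
      have hSle : S n ≤ S (n + 1) := by rw [hSv n]; exact le_sup_left
      have hle1 : finrank K (S (n + 1)) ≤ σ + n + 1 := by
        rw [hSv n]
        have h1 := Submodule.finrank_add_le_finrank_add_finrank (S n)
          (Submodule.span K {f^[n] v})
        have h2 := hspanrank (f^[n] v)
        omega
      have hle2 : σ + n ≤ finrank K (S (n + 1)) := by
        have := Submodule.finrank_mono hSle
        omega
      by_contra hne
      have heq2 : finrank K (S (n + 1)) = σ + n := by omega
      have hSS : S n = S (n + 1) := by
        apply Submodule.eq_of_le_of_finrank_le hSle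
        omega
      have hstab : m (S n) ≤ S n := by
        have h1 : m (S n) ≤ S (n + 1) := by
          rw [hSsucc2 n]; exact le_sup_right
        rwa [← hSS] at h1
      have hall : ∀ j, m^[j] P ≤ S n := by
        intro j
        induction j with
        | zero => simpa using hPleS n
        | succ k ihk =>
          rw [Function.iterate_succ_apply']
          exact le_trans (hm_mono ihk) hstab
      have htop : S n = ⊤ := hstrict _ hall
      rw [htop, finrank_top, hV] at hihr
      omega
  have hStop : S σ = ⊤ := by
    apply Submodule.eq_top_of_finrank_eq
    rw [hSrank σ le_rfl, hV]
    omega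
  have horthP : B.orthogonal P = P := by
    refine (Submodule.eq_of_le_of_finrank_le hPiso ?_).symm
    rw [LinearMap.BilinForm.finrank_orthogonal hBnd, hV, hPdim]
    omega
  have horthiter : ∀ j : ℕ, B.orthogonal (m^[j] P) = m^[j] P := by
    intro j
    induction j with
    | zero => simpa using horthP
    | succ n ih =>
      rw [Function.iterate_succ_apply', ← hmorth, ih]
  have hTS : ∀ i, B.orthogonal (S i) = T i := by
    intro i
    simp only [hS, hT]
    rw [orthogonal_finset_sup]
    apply Finset.inf_congr rfl
    intro j _
    exact horthiter j
  have hST : ∀ i, B.orthogonal (T i) = S i := by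
    intro i
    rw [← hTS i, LinearMap.BilinForm.orthogonal_orthogonal hBnd hBrefl]
  have hTrank : ∀ i, i ≤ σ → finrank K (T i) = σ - i := by
    intro i hi
    rw [← hTS i, LinearMap.BilinForm.finrank_orthogonal hBnd, hV, hSrank i hi]
    omega
  have hlrank : finrank K (T (σ - 1)) = 1 := by
    rw [hTrank (σ - 1) (by omega)]
    omega
  have hlle : ∀ j, j ≤ σ - 1 → T (σ - 1) ≤ m^[j] P := fun j hj => hTlej (σ - 1) j hj
  have hmlnotle : ¬ (T (σ - 1) ≤ m (T (σ - 1))) := by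
    intro hle
    have heq : m (T (σ - 1)) = T (σ - 1) := by
      refine (Submodule.eq_of_le_of_finrank_le hle (le_of_eq (hfinm _))).symm
    have hstab : m (S (σ - 1)) = S (σ - 1) := by
      rw [← hST (σ - 1), hmorth, heq]
    have hall : ∀ j, m^[j] P ≤ S (σ - 1) := by
      intro j
      induction j with
      | zero => simpa using hPleS (σ - 1)
      | succ k ihk =>
        rw [Function.iterate_succ_apply']
        exact le_trans (hm_mono ihk) (le_of_eq hstab)
    have htop : S (σ - 1) = ⊤ := hstrict _ hall
    have hr := hSrank (σ - 1) (by omega)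
    rw [htop, finrank_top, hV] at hr
    omega
  have hscle : ∀ i : ℕ, i ≤ σ - 1 → sc^[i] (T (σ - 1)) ≤ T (σ - 1 - i) := by
    intro i hi
    have hTi : T (σ - 1 - i) = (Finset.range (σ - 1 - i + 1)).inf (fun j => m^[j] P) := by
      simp only [hT]
    rw [hTi]
    apply Finset.le_inf
    intro j hj
    rw [Finset.mem_range] at hj
    rw [hsci_le]
    have hij : m^[i] (m^[j] P) = m^[i + j] P := (Function.iterate_add_apply m i j P).symm
    rw [hij]
    exact hlle (i + j) (by omega)
  have hscnotle : ∀ j : ℕ, 1 ≤ j → j ≤ σ - 1 → ¬ (sc^[j] (T (σ - 1)) ≤ T (σ - j)) := by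
    intro j hj1 hj2 hle
    have h1 : T (σ - j) ≤ m^[σ - j] P := hTlej (σ - j) (σ - j) le_rfl
    have h2 : sc^[j] (T (σ - 1)) ≤ m^[σ - j] P := le_trans hle h1
    have h3 : T (σ - 1) ≤ m^[j] (m^[σ - j] P) := (hsci_le j).mp h2
    have h4 : m^[j] (m^[σ - j] P) = m^[σ] P := by
      rw [← Function.iterate_add_apply]
      congr 1
      omega
    rw [h4] at h3
    apply hmlnotle
    have hmT : m (T (σ - 1)) = (Finset.range σ).inf (fun k => m^[k + 1] P) := by
      have hTi : T (σ - 1) = (Finset.range σ).inf (fun j => m^[j] P) := by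
        simp only [hT, hσ1]
      rw [hTi, hminfF]
      apply Finset.inf_congr rfl
      intro k _
      exact (Function.iterate_succ_apply' m k P).symm
    rw [hmT]
    apply Finset.le_inf
    intro k hk
    rw [Finset.mem_range] at hk
    rcases Nat.lt_or_ge (k + 1) σ with h | h
    · exact hlle (k + 1) (by omega)
    · have hk1 : k + 1 = σ := by omega
      rw [hk1]
      exact h3
  have hTsup : ∀ j, j ≤ σ - 1 →
      T (σ - 1 - j) = (Finset.range (j + 1)).sup (fun i => sc^[i] (T (σ - 1))) := by
    intro j
    induction j with
    | zero => intro _; simp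
    | succ n ih =>
      intro hn
      have hihr := ih (by omega)
      have hr : (Finset.range (n + 2)).sup (fun i => sc^[i] (T (σ - 1)))
          = T (σ - 1 - n) ⊔ sc^[n + 1] (T (σ - 1)) := by
        rw [Finset.range_add_one, Finset.sup_insert, ← hihr, sup_comm]
      rw [hr]
      symm
      apply Submodule.eq_of_le_of_finrank_le
      · apply sup_le
        · exact hTmono (by omega)
        · exact hscle (n + 1) (by omega)
      · have hA : finrank K (T (σ - 1 - (n + 1))) = n + 2 := by
          rw [hTrank _ (by omega)]
          omega
        have hB2 : finrank K (T (σ - 1 - n)) = n + 1 := by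
          rw [hTrank _ (by omega)]
          omega
        have hlt : T (σ - 1 - n) < T (σ - 1 - n) ⊔ sc^[n + 1] (T (σ - 1)) := by
          rw [left_lt_sup]
          intro hcon
          refine hscnotle (n + 1) (by omega) (by omega) ?_
          have hidx : σ - (n + 1) = σ - 1 - n := by omega
          rw [hidx]
          exact hcon
        have := Submodule.finrank_lt_finrank_of_lt hlt
        omega
  have hP2 : P = (Finset.range σ).sup (fun i => sc^[i] (T (σ - 1))) := by
    have h := hTsup (σ - 1) le_rfl
    have e : σ - 1 - (σ - 1) = 0 := by omega
    rw [e, hT0, hσ1] at h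
    exact h
  have hP3 : (Finset.range (2 * σ)).sup (fun i => m^[i] (T (σ - 1))) = ⊤ := by
    apply top_unique
    have hkey : ∀ j, j ≤ σ → m^[σ - 1 + j] P ≤
        (Finset.range (2 * σ)).sup (fun i => m^[i] (T (σ - 1))) := by
      intro j hj
      conv_lhs => rw [hP2]
      rw [hmiF]
      apply Finset.sup_le
      intro i hi
      rw [Finset.mem_range] at hi
      have e : σ - 1 + j = (σ - 1 - i + j) + i := by omega
      rw [e, Function.iterate_add_apply, hmisci i]
      have hmem : σ - 1 - i + j ∈ Finset.range (2 * σ) := Finset.mem_range.mpr (by omega)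
      exact Finset.le_sup (f := fun i => m^[i] (T (σ - 1))) hmem
    calc (⊤ : Submodule K V) = m^[σ - 1] ⊤ := (hmitop (σ - 1)).symm
      _ = m^[σ - 1] (S σ) := by rw [hStop]
      _ = (Finset.range (σ + 1)).sup (fun j => m^[σ - 1] (m^[j] P)) := by
          simp only [hS]
          rw [hmiF]
      _ ≤ (Finset.range (2 * σ)).sup (fun i => m^[i] (T (σ - 1))) := by
          apply Finset.sup_le
          intro j hj
          rw [Finset.mem_range] at hj
          rw [← Function.iterate_add_apply]
          exact hkey j (by omega)
  have hTeq : (Finset.range σ).inf (fun j => m^[j] P) = T (σ - 1) := by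
    simp only [hT]
    rw [hσ1]
  refine ⟨?_, ?_, ?_⟩
  · rw [hTeq]
    exact hlrank
  · rw [hTeq]
    exact hP2
  · rw [hTeq]
    exact hP3

end Main

end SCLAux

end Machinery

open Function Module Submodule


/-- Let `P ⊂ A ⊗ κ` be a strictly characteristic subspace, where `A`
is a `2σ`-dimensional `F_p`-space with a nondegenerate symmetric bilinear form, `κ`
algebraically closed of characteristic `p`, and `ψ = id ⊗ Frob`.  Then
`l = P ∩ ψ(P) ∩ ⋯ ∩ ψ^(σ-1)(P)` is a line, `P = l + ψ⁻¹(l) + ⋯ + ψ^-(σ-1)(l)`, and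
`l + ψ(l) + ⋯ + ψ^(2σ-1)(l) = A ⊗ κ`. -/
theorem strictly_characteristic_line
    (p : ℕ) [Fact p.Prime]
    (κ : Type*) [Field κ] [IsAlgClosed κ] [CharP κ p] [Algebra (ZMod p) κ]
    (A : Type*) [AddCommGroup A] [Module (ZMod p) A] [Module.Finite (ZMod p) A]
    (σ : ℕ) (hσ : 0 < σ) (hdim : Module.finrank (ZMod p) A = 2 * σ)
    -- a nondegenerate symmetric bilinear form on `A`
    (b : A →ₗ[ZMod p] A →ₗ[ZMod p] ZMod p)
    (hbsymm : ∀ x y, b x y = b y x)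
    (hbnd : ∀ x, (∀ y, b x y = 0) → x = 0)
    -- its `κ`-bilinear extension to `A ⊗ κ`
    (Bv : (κ ⊗[ZMod p] A) →ₗ[κ] (κ ⊗[ZMod p] A) →ₗ[κ] κ)
    (hBv : ∀ (c₁ c₂ : κ) (a₁ a₂ : A),
      Bv (c₁ ⊗ₜ a₁) (c₂ ⊗ₜ a₂) = c₁ * c₂ * algebraMap (ZMod p) κ (b a₁ a₂))
    -- `ψ = id_A ⊗ Frob_κ`
    (ψ : (κ ⊗[ZMod p] A) →ₗ[ZMod p] (κ ⊗[ZMod p] A))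
    (hψ : ∀ (c : κ) (a : A), ψ (c ⊗ₜ a) = (c ^ p) ⊗ₜ a)
    -- `P` is a strictly characteristic subspace
    (P : Submodule κ (κ ⊗[ZMod p] A))
    (hPdim : Module.finrank κ P = σ)
    (hPψ : Module.finrank κ
      ↥(P ⊔ Submodule.span κ (⇑ψ '' (P : Set (κ ⊗[ZMod p] A)))) = σ + 1)
    (hPiso : ∀ v ∈ P, ∀ w ∈ P, Bv v w = 0)
    (hstrict : Submodule.span κ
      (⋃ i : ℕ, (⇑ψ)^[i] '' (P : Set (κ ⊗[ZMod p] A))) = ⊤) :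
    Module.finrank κ
        ↥(⨅ i ∈ Finset.range σ,
          Submodule.span κ ((⇑ψ)^[i] '' (P : Set (κ ⊗[ZMod p] A)))) = 1 ∧
    P = Submodule.span κ
        (⋃ i ∈ Finset.range σ, (⇑ψ)^[i] ⁻¹'
          ((⨅ k ∈ Finset.range σ,
            Submodule.span κ ((⇑ψ)^[k] '' (P : Set (κ ⊗[ZMod p] A)))) :
              Set (κ ⊗[ZMod p] A))) ∧
    Submodule.span κ
        (⋃ i ∈ Finset.range (2 * σ), (⇑ψ)^[i] ''
          ((⨅ k ∈ Finset.range σ,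
            Submodule.span κ ((⇑ψ)^[k] '' (P : Set (κ ⊗[ZMod p] A)))) :
              Set (κ ⊗[ZMod p] A))) = ⊤ := by
  classical
  set φ : κ ≃+* κ := frobeniusEquiv κ p with hφdef
  have hφ : ∀ c : κ, φ c = c ^ p := by
    intro c
    rw [hφdef, coe_frobeniusEquiv, frobenius_def]
  -- semilinearity data for ψ
  have hfa : ∀ x y : κ ⊗[ZMod p] A, ψ (x + y) = ψ x + ψ y := fun x y => map_add ψ x y
  have hfs : ∀ (c : κ) (x : κ ⊗[ZMod p] A), ψ (c • x) = φ c • ψ x := by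
    intro c x
    induction x using TensorProduct.induction_on with
    | zero => rw [smul_zero, map_zero, smul_zero]
    | tmul d a =>
      rw [TensorProduct.smul_tmul', smul_eq_mul, hψ, hψ, TensorProduct.smul_tmul',
        smul_eq_mul, hφ, mul_pow]
    | add x y h1 h2 =>
      rw [smul_add, map_add, h1, h2, map_add, smul_add]
  -- bijectivity of ψ
  have hmapsmul : ∀ (r : ZMod p) (c : κ), φ.symm (r • c) = r • φ.symm c := by
    intro r c
    rw [Algebra.smul_def, Algebra.smul_def, map_mul]
    congr 1
    have : φ (algebraMap (ZMod p) κ r) = algebraMap (ZMod p) κ r := by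
      rw [hφ, ← map_pow, ZMod.pow_card]
    conv_lhs => rw [← this]
    rw [φ.symm_apply_apply]
  have hfb : Function.Bijective (⇑ψ) := by
    set finv : κ →ₗ[ZMod p] κ :=
      { toFun := ⇑φ.symm
        map_add' := fun x y => map_add φ.symm x y
        map_smul' := fun r c => hmapsmul r c } with hfinv
    set g : (κ ⊗[ZMod p] A) →ₗ[ZMod p] (κ ⊗[ZMod p] A) := TensorProduct.map finv LinearMap.id with hg
    have hgψ : ∀ x : κ ⊗[ZMod p] A, g (ψ x) = x := by
      intro x
      induction x using TensorProduct.induction_on with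
      | zero => rw [map_zero, map_zero]
      | tmul c a =>
        rw [hψ, hg, TensorProduct.map_tmul]
        congr 1
        show φ.symm (c ^ p) = c
        rw [← hφ, φ.symm_apply_apply]
      | add x y h1 h2 => rw [map_add, map_add, h1, h2]
    have hψg : ∀ x : κ ⊗[ZMod p] A, ψ (g x) = x := by
      intro x
      induction x using TensorProduct.induction_on with
      | zero => rw [map_zero, map_zero]
      | tmul c a =>
        rw [hg, TensorProduct.map_tmul]
        show ψ ((φ.symm c) ⊗ₜ a) = c ⊗ₜ a
        rw [hψ, ← hφ, φ.apply_symm_apply]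
      | add x y h1 h2 => rw [map_add, map_add, h1, h2]
    exact Function.bijective_iff_has_inverse.mpr ⟨⇑g, hgψ, hψg⟩
  -- finite dimensionality
  let e : Basis (Fin (finrank (ZMod p) A)) (ZMod p) A := Module.finBasis (ZMod p) A
  haveI : FiniteDimensional κ (κ ⊗[ZMod p] A) := Module.Finite.of_basis (e.baseChange κ)
  have hV : finrank κ (κ ⊗[ZMod p] A) = 2 * σ := by
    rw [finrank_eq_card_basis (e.baseChange κ), Fintype.card_fin, hdim]
  -- symmetry and Frobenius-compatibility of Bv
  have hBsymm : ∀ x y : κ ⊗[ZMod p] A, Bv x y = Bv y x := by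
    intro x y
    induction x using TensorProduct.induction_on with
    | zero => simp
    | tmul c a =>
      induction y using TensorProduct.induction_on with
      | zero => simp
      | tmul d a' => rw [hBv, hBv, hbsymm]; ring
      | add y1 y2 h1 h2 => simp only [map_add, LinearMap.add_apply, h1, h2]
    | add x1 x2 h1 h2 => simp only [map_add, LinearMap.add_apply, h1, h2]
  have hBrefl : LinearMap.BilinForm.IsRefl Bv := by
    intro x y h
    rw [hBsymm]
    exact h
  have hBf : ∀ x y : κ ⊗[ZMod p] A, Bv (ψ x) (ψ y) = φ (Bv x y) := by
    intro x y
    induction x using TensorProduct.induction_on with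
    | zero => simp
    | tmul c a =>
      induction y using TensorProduct.induction_on with
      | zero => simp
      | tmul d a' =>
        rw [hψ, hψ, hBv, hBv, hφ, mul_pow, mul_pow]
        congr 1
        rw [← map_pow, ZMod.pow_card]
      | add y1 y2 h1 h2 =>
        simp only [map_add, LinearMap.add_apply, h1, h2]
    | add x1 x2 h1 h2 =>
      simp only [map_add, LinearMap.add_apply, h1, h2]
  -- nondegeneracy of Bv
  have hBnd : LinearMap.BilinForm.Nondegenerate Bv := by
    rw [LinearMap.BilinForm.nondegenerate_iff_det_ne_zero (e.baseChange κ)]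
    have hmat : LinearMap.BilinForm.toMatrix (e.baseChange κ) Bv
        = (algebraMap (ZMod p) κ).mapMatrix (LinearMap.BilinForm.toMatrix e b) := by
      ext i j
      rw [BilinForm.toMatrix_apply, RingHom.mapMatrix_apply, Matrix.map_apply,
        BilinForm.toMatrix_apply, Basis.baseChange_apply, Basis.baseChange_apply, hBv,
        one_mul, one_mul]
    rw [hmat, ← RingHom.map_det]
    have hdet : (LinearMap.BilinForm.toMatrix e b).det ≠ 0 := by
      rw [← LinearMap.BilinForm.nondegenerate_iff_det_ne_zero e]
      exact ⟨hbnd, fun y hy => hbnd y (fun x => by rw [hbsymm]; exact hy x)⟩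
    intro hcon
    exact hdet ((map_eq_zero_iff _ (algebraMap (ZMod p) κ).injective).mp hcon)
  -- translate hypotheses
  have hS1' : finrank κ ↥(P ⊔ SCLAux.smap φ (⇑ψ) hfa hfs P) = σ + 1 := by
    rw [← SCLAux.span_image hfa hfs hfb]
    exact hPψ
  have hPiso' : P ≤ LinearMap.BilinForm.orthogonal Bv P := by
    intro x hx n hn
    exact hPiso n hn x hx
  have hstrict' : ∀ Q : Submodule κ (κ ⊗[ZMod p] A),
      (∀ j : ℕ, (SCLAux.smap φ (⇑ψ) hfa hfs)^[j] P ≤ Q) → Q = ⊤ := by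
    intro Q hQ
    rw [eq_top_iff, ← hstrict, Submodule.span_le]
    apply Set.iUnion_subset
    intro i
    rw [← SCLAux.coe_smap_iter hfa hfs hfb]
    exact SetLike.coe_subset_coe.mpr (hQ i)
  obtain ⟨h1, h2, h3⟩ := SCLAux.main hfa hfs hfb hBrefl hBnd hBf σ hσ hV P hPdim hS1'
    hPiso' hstrict'
  have hspan_eq : ∀ (i : ℕ) (Q : Submodule κ (κ ⊗[ZMod p] A)),
      Submodule.span κ ((⇑ψ)^[i] '' (Q : Set (κ ⊗[ZMod p] A))) = (SCLAux.smap φ (⇑ψ) hfa hfs)^[i] Q := by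
    intro i Q
    rw [← SCLAux.coe_smap_iter hfa hfs hfb, Submodule.span_eq]
  have hpre_eq : ∀ (i : ℕ) (Q : Submodule κ (κ ⊗[ZMod p] A)),
      Submodule.span κ ((⇑ψ)^[i] ⁻¹' (Q : Set (κ ⊗[ZMod p] A))) = (SCLAux.scomap φ (⇑ψ) hfa hfs)^[i] Q := by
    intro i Q
    rw [← SCLAux.coe_scomap_iter hfa hfs hfb, Submodule.span_eq]
  have hsetL : (⨅ k ∈ Finset.range σ,
        ((Submodule.span κ ((⇑ψ)^[k] '' (P : Set (κ ⊗[ZMod p] A)))) : Set (κ ⊗[ZMod p] A)))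
      = ((((Finset.range σ).inf fun j => (SCLAux.smap φ (⇑ψ) hfa hfs)^[j] P) :
          Submodule κ (κ ⊗[ZMod p] A)) : Set (κ ⊗[ZMod p] A)) := by
    ext x
    simp only [Set.mem_iInter, Set.iInf_eq_iInter, SetLike.mem_coe, Finset.inf_eq_iInf,
      Submodule.mem_iInf, hspan_eq]
  refine ⟨?_, ?_, ?_⟩
  · have e1 : (⨅ i ∈ Finset.range σ,
        Submodule.span κ ((⇑ψ)^[i] '' (P : Set (κ ⊗[ZMod p] A))))
        = (Finset.range σ).inf (fun j => (SCLAux.smap φ (⇑ψ) hfa hfs)^[j] P) := by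
      rw [← Finset.inf_eq_iInf]
      exact Finset.inf_congr rfl (fun i _ => hspan_eq i P)
    rw [e1]
    exact h1
  · rw [hsetL, Submodule.span_iUnion₂]
    simp only [hpre_eq, ← Finset.sup_eq_iSup]
    exact h2
  · rw [hsetL, Submodule.span_iUnion₂]
    simp only [hspan_eq, ← Finset.sup_eq_iSup]
    exact h3
end
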